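/- arXiv:0808.2942 — 4 statements merged into one kernel-verified Lean document; each statement's English description precedes it below -/
import Mathlib

section
/- Let I be a nonempty set. The bounded linear functional tr : ℓ¹(I×I) → ℂ defined by tr(c) = Σ_{i∈I} c(i,i) is nonzero (indeed tr(δ_{(k,k)}) = 1 for any k ∈ I), and its kernel equals the closed linear span in ℓ¹(I×I) of the set {δ_{(i,j)} : i,j ∈ I, i ≠ j} ∪ {δ_{(i,i)} − δ_{(j,j)} : i,j ∈ I}. -/
open scoped TensorProduct BigOperators ENNReal
open Filter

noncomputable section

/-- `ℓ¹(X)`: the Banach space of absolutely summable complex functions on `X`. -/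
abbrev L1 (X : Type) : Type := lp (fun _ : X => ℂ) 1

open Classical in
/-- The point mass `δ_x` in `ℓ¹(X)`. -/
noncomputable def delta {X : Type} (x : X) : L1 X := lp.single 1 x (1 : ℂ)

namespace BrandtAux

variable {X : Type}

lemma L1_summable_norm (f : L1 X) : Summable (fun x => ‖f x‖) := by
  have := (lp.memℓp f).summable (p := 1) (by norm_num)
  simpa using this

lemma L1_norm_eq (f : L1 X) : ‖f‖ = ∑' x, ‖f x‖ := by
  have := lp.norm_rpow_eq_tsum (p := 1) (by norm_num) f
  simpa using this

lemma single_apply' [DecidableEq X] (x y : X) (a : ℂ) : (lp.single 1 x a : L1 X) y = if y = x then a else 0 := by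
  rcases eq_or_ne y x with h | h
  · subst h; simp [lp.single_apply_self]
  · simp [lp.single_apply_ne _ _ _ h, h]

lemma single_instance_irrel (i1 i2 : DecidableEq X) (x : X) (a : ℂ) :
    (@lp.single X (fun _ => ℂ) _ i1 1 x a : L1 X) = @lp.single X (fun _ => ℂ) _ i2 1 x a := by
  rw [Subsingleton.elim i1 i2]

lemma delta_eq_single [DecidableEq X] (x : X) : (delta x : L1 X) = lp.single 1 x 1 := by
  simp only [delta]
  exact single_instance_irrel _ _ x 1

lemma delta_apply [DecidableEq X] (x y : X) : (delta x : L1 X) y = if y = x then 1 else 0 := by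
  rw [delta_eq_single]; exact single_apply' x y 1

lemma single_eq_smul_delta [DecidableEq X] (x : X) (a : ℂ) :
    (lp.single 1 x a : L1 X) = a • delta x := by
  rw [delta_eq_single, ← lp.single_smul, smul_eq_mul, mul_one]

lemma norm_delta (x : X) : ‖(delta x : L1 X)‖ = 1 := by
  classical
  rw [delta_eq_single]
  have := lp.norm_single (p := 1) (E := fun _ : X => ℂ) (by norm_num) x (1 : ℂ)
  simpa using this

variable {I : Type}

lemma diag_inj : Function.Injective (fun i : I => (i, i)) := fun a b h => congrArg Prod.fst h

lemma diag_summable_norm (c : L1 (I × I)) : Summable (fun i : I => ‖c (i, i)‖) :=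
  (L1_summable_norm c).comp_injective diag_inj

lemma diag_summable (c : L1 (I × I)) : Summable (fun i : I => c (i, i)) :=
  (diag_summable_norm c).of_norm

lemma tr_bound (c : L1 (I × I)) : ‖∑' i : I, c (i, i)‖ ≤ ‖c‖ := by
  calc ‖∑' i : I, c (i, i)‖ ≤ ∑' i : I, ‖c (i, i)‖ :=
        norm_tsum_le_tsum_norm (diag_summable_norm c)
    _ ≤ ∑' x : I × I, ‖c x‖ :=
        tsum_comp_le_tsum_of_inj (L1_summable_norm c) (fun _ => norm_nonneg _) diag_inj
    _ = ‖c‖ := (L1_norm_eq c).symm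

/-- The trace as a linear map. -/
noncomputable def trL (I : Type) : L1 (I × I) →ₗ[ℂ] ℂ where
  toFun c := ∑' i : I, c (i, i)
  map_add' a b := by
    have h : ∀ i : I, (a + b) (i, i) = a (i, i) + b (i, i) := fun i => by
      rw [lp.coeFn_add]; rfl
    simp_rw [h]
    exact Summable.tsum_add (diag_summable a) (diag_summable b)
  map_smul' r a := by
    have h : ∀ i : I, (r • a) (i, i) = r * a (i, i) := fun i => by
      rw [lp.coeFn_smul]; rfl
    simp_rw [h]
    exact tsum_mul_left

lemma trL_single [DecidableEq I] (x : I × I) (a : ℂ) :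
    trL I (lp.single 1 x a) = if x.1 = x.2 then a else 0 := by
  have h : ∀ i : I, (lp.single 1 x a : L1 (I × I)) (i, i) = if (i, i) = x then a else 0 :=
    fun i => single_apply' x (i, i) a
  show (∑' i : I, (lp.single 1 x a : L1 (I × I)) (i, i)) = _
  simp_rw [h]
  rcases eq_or_ne x.1 x.2 with hx | hx
  · have : ∀ i : I, (if (i, i) = x then a else 0) = if i = x.1 then a else 0 := by
      intro i
      congr 1
      simp only [eq_iff_iff, Prod.ext_iff]
      constructor
      · rintro ⟨h1, _⟩; exact h1
      · rintro rfl; exact ⟨rfl, hx⟩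
    simp_rw [this]
    simp [hx, tsum_ite_eq]
  · have : ∀ i : I, (if (i, i) = x then a else 0) = 0 := by
      intro i
      rw [if_neg]
      rintro rfl
      exact hx rfl
    simp_rw [this]
    simp [hx]

end BrandtAux

open BrandtAux in
/-- For a nonempty set `I`, the bounded linear functional
`tr : ℓ¹(I×I) → ℂ`, `tr c = ∑_{i ∈ I} c (i,i)`, is nonzero (indeed
`tr (δ_(k,k)) = 1` for every `k`), and its kernel is the closed linear span of
`{δ_(i,j) : i ≠ j} ∪ {δ_(i,i) - δ_(j,j) : i, j ∈ I}`. -/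
theorem brandt_morita_stmt0 (I : Type) [Nonempty I] :
    ∃ tr : L1 (I × I) →L[ℂ] ℂ,
      (∀ c : L1 (I × I), tr c = ∑' i : I, c (i, i)) ∧
      tr ≠ 0 ∧
      (∀ k : I, tr (delta (k, k)) = 1) ∧
      LinearMap.ker (tr : L1 (I × I) →ₗ[ℂ] ℂ) =
        (Submodule.span ℂ
          ({x : L1 (I × I) | ∃ i j : I, i ≠ j ∧ x = delta (i, j)} ∪
           {x : L1 (I × I) | ∃ i j : I, x = delta (i, i) - delta (j, j)})).topologicalClosure := by
  classical
  set tr : L1 (I × I) →L[ℂ] ℂ :=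
    LinearMap.mkContinuous (trL I) 1 (fun c => by rw [one_mul]; exact tr_bound c) with htr
  have htr_apply : ∀ c : L1 (I × I), tr c = ∑' i : I, c (i, i) := fun c => rfl
  have htr_delta : ∀ x : I × I, tr (delta x) = if x.1 = x.2 then 1 else 0 := by
    intro x
    rw [delta_eq_single]
    exact trL_single x 1
  have hdiag : ∀ k : I, tr (delta (k, k)) = 1 := by
    intro k; rw [htr_delta]; simp
  set S : Set (L1 (I × I)) :=
    {x : L1 (I × I) | ∃ i j : I, i ≠ j ∧ x = delta (i, j)} ∪
      {x : L1 (I × I) | ∃ i j : I, x = delta (i, i) - delta (j, j)} with hS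
  refine ⟨tr, htr_apply, ?_, hdiag, ?_⟩
  · intro h0
    obtain ⟨k⟩ := ‹Nonempty I›
    have := hdiag k
    rw [h0] at this
    simp at this
  · -- kernel equality
    apply le_antisymm
    · -- ker ≤ closure of span
      intro c hc
      have hc0 : tr c = 0 := hc
      obtain ⟨k⟩ := ‹Nonempty I›
      rw [← SetLike.mem_coe, Submodule.topologicalClosure_coe]
      rw [Metric.mem_closure_iff]
      intro ε hε
      -- approximate c by a finite sum of singles
      have hsum : HasSum (fun x : I × I => (lp.single 1 x (c x) : L1 (I × I))) c :=
        lp.hasSum_single (by norm_num) c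
      have : ∀ᶠ F in (atTop : Filter (Finset (I × I))),
          dist (∑ x ∈ F, (lp.single 1 x (c x) : L1 (I × I))) c < ε / 2 :=
        Metric.tendsto_nhds.mp hsum _ (by positivity)
      obtain ⟨F, hF⟩ := this.exists
      set y : L1 (I × I) := ∑ x ∈ F, (lp.single 1 x (c x) : L1 (I × I)) with hy
      set z : L1 (I × I) := y - tr y • delta (k, k) with hz
      have htry : tr y = ∑ x ∈ F, (if x.1 = x.2 then c x else 0) := by
        rw [hy, map_sum]
        refine Finset.sum_congr rfl fun x _ => ?_
        show trL I _ = _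
        rw [trL_single]
      have hzmem : z ∈ Submodule.span ℂ S := by
        have hzsum : z = ∑ x ∈ F,
            ((lp.single 1 x (c x) : L1 (I × I)) -
              (if x.1 = x.2 then c x else 0) • delta (k, k)) := by
          rw [hz, Finset.sum_sub_distrib, ← Finset.sum_smul, ← htry]
        rw [hzsum]
        refine Submodule.sum_mem _ fun x _ => ?_
        rcases eq_or_ne x.1 x.2 with hx | hx
        · have hxx : x = (x.1, x.1) := by
            ext
            · rfl
            · exact hx.symm
          rw [if_pos hx, single_eq_smul_delta, ← smul_sub]
          refine Submodule.smul_mem _ _ (Submodule.subset_span ?_)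
          exact Or.inr ⟨x.1, k, by rw [← hxx]⟩
        · rw [if_neg hx, zero_smul, sub_zero, single_eq_smul_delta]
          refine Submodule.smul_mem _ _ (Submodule.subset_span ?_)
          exact Or.inl ⟨x.1, x.2, hx, by rw [Prod.mk.eta]⟩
      refine ⟨z, hzmem, ?_⟩
      have h1 : dist c z ≤ dist c y + ‖tr y • delta (k, k)‖ := by
        rw [dist_eq_norm, dist_eq_norm, hz]
        calc ‖c - (y - tr y • delta (k, k))‖
            = ‖(c - y) + tr y • delta (k, k)‖ := by congr 1; abel
          _ ≤ ‖c - y‖ + ‖tr y • delta (k, k)‖ := norm_add_le _ _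
      have h2 : ‖tr y • delta (k, k)‖ = ‖tr y‖ := by
        rw [norm_smul, norm_delta, mul_one]
      have h3 : ‖tr y‖ ≤ ‖y - c‖ := by
        have : tr y = tr (y - c) := by rw [map_sub, hc0, sub_zero]
        rw [this]
        exact tr_bound (y - c)
      have hyc : dist c y < ε / 2 := by rw [dist_comm] at hF; exact hF
      have hyc' : ‖y - c‖ < ε / 2 := by rw [← dist_eq_norm]; exact hF
      calc dist c z ≤ dist c y + ‖tr y‖ := by rw [← h2]; exact h1
        _ < ε / 2 + ε / 2 := by
            have := h3.trans_lt hyc'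
            linarith
        _ = ε := by ring
    · -- closure of span ≤ ker
      refine Submodule.topologicalClosure_minimal _ ?_ (ContinuousLinearMap.isClosed_ker tr)
      rw [Submodule.span_le]
      rintro x (⟨i, j, hij, rfl⟩ | ⟨i, j, rfl⟩)
      · simp only [SetLike.mem_coe, LinearMap.mem_ker, ContinuousLinearMap.coe_coe]
        rw [htr_delta]
        simp [hij]
      · simp only [SetLike.mem_coe, LinearMap.mem_ker, ContinuousLinearMap.coe_coe, map_sub]
        rw [htr_delta, htr_delta]
        simp
end
end

section
/- Let I be a nonempty set. The bounded linear functional ν̄ : ℓ¹(I) ⊗̂ ℓ¹(I) → ℂ determined by ν̄(a ⊗ b) = Σ_{i∈I} a(i)b(i) is nonzero, and its kernel equals the closed linear span N of {b·a ⊗ b′ − b ⊗ a·b′ : b, b′ ∈ ℓ¹(I), a ∈ M_I}. Consequently the induced map ν : ℓ¹(I) ⊗̂_{M_I} ℓ¹(I) → ℂ, ν(a ⊗ b) = Σ_{i∈I} a(i)b(i), is an isomorphism of Banach spaces. -/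
open scoped TensorProduct BigOperators ENNReal
open Filter

noncomputable section

/-- The projective tensor norm of an element of the algebraic tensor product
`E ⊗[ℂ] F`: the infimum of `∑ ‖xᵢ‖ ‖yᵢ‖` over all finite representations
`z = ∑ xᵢ ⊗ yᵢ`. -/
def projNorm {E F : Type} [SeminormedAddCommGroup E] [NormedSpace ℂ E]
    [SeminormedAddCommGroup F] [NormedSpace ℂ F] (z : E ⊗[ℂ] F) : ℝ :=
  sInf {r : ℝ | ∃ (n : ℕ) (x : Fin n → E) (y : Fin n → F),
    z = ∑ i, x i ⊗ₜ[ℂ] y i ∧ r = ∑ i, ‖x i‖ * ‖y i‖}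

/-- `(T, φ)` is a realization of the completed projective tensor product `E ⊗̂ F`:
`T` is a Banach space, the canonical map from the algebraic tensor product is an
isometry with respect to the projective tensor norm, and it has dense range. -/
structure IsProjTensor (E F T : Type) [SeminormedAddCommGroup E] [NormedSpace ℂ E]
    [SeminormedAddCommGroup F] [NormedSpace ℂ F]
    [SeminormedAddCommGroup T] [NormedSpace ℂ T]
    (φ : E →ₗ[ℂ] F →ₗ[ℂ] T) : Prop where
  complete : CompleteSpace T
  isometry : ∀ z : E ⊗[ℂ] F, ‖TensorProduct.lift φ z‖ = projNorm z
  dense : DenseRange ⇑(TensorProduct.lift φ)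

/-- The closed linear span of the `A`-balancing relations
`{x·a ⊗ y - x ⊗ a·y}` inside a realization `T` of `E ⊗̂ F`; the quotient
`T ⧸ balancer φ r l` is the `A`-module tensor product `E ⊗̂_A F`. -/
def balancer {A E F T : Type} [SeminormedAddCommGroup E] [NormedSpace ℂ E]
    [SeminormedAddCommGroup F] [NormedSpace ℂ F]
    [SeminormedAddCommGroup T] [NormedSpace ℂ T]
    (φ : E →ₗ[ℂ] F →ₗ[ℂ] T) (r : E → A → E) (l : A → F → F) : Submodule ℂ T :=
  (Submodule.span ℂ {z : T | ∃ (x : E) (a : A) (y : F), z = φ (r x a) y - φ x (l a y)}).topologicalClosure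

/-! ### Auxiliary facts about `ℓ¹` -/

lemma L1.hasSum_norm {X : Type} (a : L1 X) : HasSum (fun x => ‖a x‖) ‖a‖ := by
  have := lp.hasSum_norm (p := 1) (E := fun _ : X => ℂ) (by norm_num) a
  simpa using this

lemma L1.summable_norm {X : Type} (a : L1 X) : Summable (fun x => ‖a x‖) :=
  (L1.hasSum_norm a).summable

lemma L1.norm_eq_tsum {X : Type} (a : L1 X) : ‖a‖ = ∑' x, ‖a x‖ :=
  (L1.hasSum_norm a).tsum_eq.symm

lemma L1.apply_le_norm {X : Type} (a : L1 X) (x : X) : ‖a x‖ ≤ ‖a‖ :=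
  lp.norm_apply_le_norm one_ne_zero a x

lemma L1.memℓp_of_summable {X : Type} {f : X → ℂ} (h : Summable fun x => ‖f x‖) :
    Memℓp f 1 := memℓp_gen (by simpa using h)

open Classical in
lemma delta_apply {X : Type} (x y : X) : (delta x : L1 X) y = if y = x then 1 else 0 := by
  rw [delta, lp.single_apply]
  by_cases h : y = x <;> simp [h]

lemma smul_delta {X : Type} [DecidableEq X] (x : X) (s : ℂ) :
    lp.single 1 x s = s • (delta x : L1 X) := by
  apply lp.ext; funext y
  rw [lp.coeFn_smul, Pi.smul_apply, smul_eq_mul, lp.single_apply, delta_apply]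
  by_cases h : y = x <;> simp [h]

lemma hasSum_delta {X : Type} (a : L1 X) : HasSum (fun x => a x • (delta x : L1 X)) a := by
  classical
  have h := lp.hasSum_single (p := 1) (E := fun _ : X => ℂ) (by norm_num) a
  exact h.congr_fun fun x => (smul_delta x (a x)).symm

/-! ### The matrix actions on `ℓ¹` -/

section act
variable {I : Type}

lemma lsummable (c : L1 (I × I)) (x : L1 I) :
    Summable (fun p : I × I => ‖c p‖ * ‖x p.2‖) :=
  Summable.of_nonneg_of_le (fun p => by positivity)
    (fun p => mul_le_mul_of_nonneg_left (L1.apply_le_norm x p.2) (norm_nonneg _))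
    ((L1.summable_norm c).mul_right ‖x‖)

lemma lsummable_row (c : L1 (I × I)) (x : L1 I) (i : I) :
    Summable (fun k => ‖c (i, k) * x k‖) := by
  have := (lsummable c x).prod_factor i
  simpa [norm_mul] using this

noncomputable def mulVecFun (c : L1 (I × I)) (x : L1 I) : I → ℂ :=
  fun i => ∑' k, c (i, k) * x k

lemma mulVec_bound (c : L1 (I × I)) (x : L1 I) :
    Summable (fun i => ‖mulVecFun c x i‖) ∧ ∑' i, ‖mulVecFun c x i‖ ≤ ‖c‖ * ‖x‖ := by
  have hs := lsummable c x
  have hrow : ∀ i, Summable fun k => ‖c (i, k)‖ * ‖x k‖ := by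
    intro i; exact hs.prod_factor i
  have hmarg : Summable fun i => ∑' k, ‖c (i, k)‖ * ‖x k‖ :=
    ((summable_prod_of_nonneg (fun p => by positivity)).mp hs).2
  have hle : ∀ i, ‖mulVecFun c x i‖ ≤ ∑' k, ‖c (i, k)‖ * ‖x k‖ := by
    intro i
    refine (norm_tsum_le_tsum_norm ?_).trans ?_
    · exact lsummable_row c x i
    · exact le_of_eq (by simp [norm_mul])
  constructor
  · exact Summable.of_nonneg_of_le (fun i => norm_nonneg _) hle hmarg
  · refine (Summable.tsum_le_tsum hle (Summable.of_nonneg_of_le (fun i => norm_nonneg _) hle hmarg) hmarg).trans ?_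
    have : ∑' i, ∑' k, ‖c (i, k)‖ * ‖x k‖ = ∑' p : I × I, ‖c p‖ * ‖x p.2‖ :=
      (Summable.tsum_prod' hs hrow).symm
    rw [this]
    calc ∑' p : I × I, ‖c p‖ * ‖x p.2‖ ≤ ∑' p : I × I, ‖c p‖ * ‖x‖ := by
          refine Summable.tsum_le_tsum (fun p => mul_le_mul_of_nonneg_left (L1.apply_le_norm x p.2) (norm_nonneg _)) hs ((L1.summable_norm c).mul_right ‖x‖)
      _ = ‖c‖ * ‖x‖ := by rw [tsum_mul_right, ← L1.norm_eq_tsum]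

noncomputable def mulVec (c : L1 (I × I)) (x : L1 I) : L1 I :=
  ⟨mulVecFun c x, L1.memℓp_of_summable (mulVec_bound c x).1⟩

lemma mulVec_norm (c : L1 (I × I)) (x : L1 I) : ‖mulVec c x‖ ≤ ‖c‖ * ‖x‖ := by
  rw [L1.norm_eq_tsum]; exact (mulVec_bound c x).2

lemma rsummable_base (x : L1 I) (c : L1 (I × I)) :
    Summable (fun p : I × I => ‖x p.1‖ * ‖c p‖) :=
  Summable.of_nonneg_of_le (fun p => by positivity)
    (fun p => mul_le_mul_of_nonneg_right (L1.apply_le_norm x p.1) (norm_nonneg _))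
    ((L1.summable_norm c).mul_left ‖x‖)

lemma rsummable (x : L1 I) (c : L1 (I × I)) :
    Summable (fun p : I × I => ‖x p.2‖ * ‖c p.swap‖) :=
  ((Equiv.prodComm I I).summable_iff).mpr (rsummable_base x c)

noncomputable def vecMulFun (x : L1 I) (c : L1 (I × I)) : I → ℂ :=
  fun i => ∑' k, x k * c (k, i)

lemma rsummable_row (x : L1 I) (c : L1 (I × I)) (i : I) :
    Summable (fun k => ‖x k * c (k, i)‖) := by
  have := (rsummable x c).prod_factor i
  simpa [norm_mul] using this

lemma vecMul_bound (x : L1 I) (c : L1 (I × I)) :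
    Summable (fun i => ‖vecMulFun x c i‖) ∧ ∑' i, ‖vecMulFun x c i‖ ≤ ‖x‖ * ‖c‖ := by
  have hs := rsummable x c
  have hrow : ∀ i, Summable fun k => ‖x k‖ * ‖c (k, i)‖ := fun i => hs.prod_factor i
  have hmarg : Summable fun i => ∑' k, ‖x k‖ * ‖c (k, i)‖ :=
    ((summable_prod_of_nonneg (fun p => by positivity)).mp hs).2
  have hle : ∀ i, ‖vecMulFun x c i‖ ≤ ∑' k, ‖x k‖ * ‖c (k, i)‖ := by
    intro i
    refine (norm_tsum_le_tsum_norm (rsummable_row x c i)).trans (le_of_eq (by simp [norm_mul]))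
  constructor
  · exact Summable.of_nonneg_of_le (fun i => norm_nonneg _) hle hmarg
  · refine (Summable.tsum_le_tsum hle (Summable.of_nonneg_of_le (fun i => norm_nonneg _) hle hmarg) hmarg).trans ?_
    have h2 : ∑' i, ∑' k, ‖x k‖ * ‖c (k, i)‖ = ∑' p : I × I, ‖x p.2‖ * ‖c p.swap‖ :=
      (Summable.tsum_prod' hs hrow).symm
    rw [h2]
    have h3 : ∑' p : I × I, ‖x p.2‖ * ‖c p.swap‖ = ∑' p : I × I, ‖x p.1‖ * ‖c p‖ := by
      rw [← (Equiv.prodComm I I).tsum_eq (fun p : I × I => ‖x p.1‖ * ‖c p‖)]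
      rfl
    rw [h3]
    calc ∑' p : I × I, ‖x p.1‖ * ‖c p‖ ≤ ∑' p : I × I, ‖x‖ * ‖c p‖ := by
          refine Summable.tsum_le_tsum (fun p => mul_le_mul_of_nonneg_right (L1.apply_le_norm x p.1) (norm_nonneg _)) (rsummable_base x c) ((L1.summable_norm c).mul_left ‖x‖)
      _ = ‖x‖ * ‖c‖ := by rw [tsum_mul_left, ← L1.norm_eq_tsum]

noncomputable def vecMul (x : L1 I) (c : L1 (I × I)) : L1 I :=
  ⟨vecMulFun x c, L1.memℓp_of_summable (vecMul_bound x c).1⟩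

lemma vecMul_norm (x : L1 I) (c : L1 (I × I)) : ‖vecMul x c‖ ≤ ‖x‖ * ‖c‖ := by
  rw [L1.norm_eq_tsum]; exact (vecMul_bound x c).2

lemma lrow_summable (c : L1 (I × I)) (x : L1 I) (i : I) :
    Summable fun k => c (i, k) * x k := (lsummable_row c x i).of_norm

lemma rrow_summable (x : L1 I) (c : L1 (I × I)) (i : I) :
    Summable fun k => x k * c (k, i) := (rsummable_row x c i).of_norm

noncomputable def lActL : L1 (I × I) →L[ℂ] L1 I →L[ℂ] L1 I :=
  LinearMap.mkContinuous₂
    (LinearMap.mk₂ ℂ mulVec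
      (fun c c' x => by
        apply lp.ext; funext i
        show (∑' k, (c + c') (i, k) * x k) = mulVec c x i + mulVec c' x i
        simp only [lp.coeFn_add, Pi.add_apply, add_mul]
        exact Summable.tsum_add (lrow_summable c x i) (lrow_summable c' x i))
      (fun s c x => by
        apply lp.ext; funext i
        show (∑' k, (s • c) (i, k) * x k) = (s • mulVec c x) i
        simp only [lp.coeFn_smul, Pi.smul_apply, smul_eq_mul, mul_assoc]
        exact tsum_mul_left)
      (fun c x y => by
        apply lp.ext; funext i
        show (∑' k, c (i, k) * (x + y) k) = mulVec c x i + mulVec c y i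
        simp only [lp.coeFn_add, Pi.add_apply, mul_add]
        exact Summable.tsum_add (lrow_summable c x i) (lrow_summable c y i))
      (fun s c x => by
        apply lp.ext; funext i
        show (∑' k, c (i, k) * (s • x) k) = (s • mulVec c x) i
        simp only [lp.coeFn_smul, Pi.smul_apply, smul_eq_mul]
        rw [show (fun k => c (i, k) * (s * x k)) = fun k => s * (c (i, k) * x k) by
          funext k; ring]
        exact tsum_mul_left))
    1 (fun c x => by simpa using mulVec_norm c x)

noncomputable def rActL : L1 I →L[ℂ] L1 (I × I) →L[ℂ] L1 I :=
  LinearMap.mkContinuous₂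
    (LinearMap.mk₂ ℂ vecMul
      (fun x y c => by
        apply lp.ext; funext i
        show (∑' k, (x + y) k * c (k, i)) = vecMul x c i + vecMul y c i
        simp only [lp.coeFn_add, Pi.add_apply, add_mul]
        exact Summable.tsum_add (rrow_summable x c i) (rrow_summable y c i))
      (fun s x c => by
        apply lp.ext; funext i
        show (∑' k, (s • x) k * c (k, i)) = (s • vecMul x c) i
        simp only [lp.coeFn_smul, Pi.smul_apply, smul_eq_mul, mul_assoc]
        exact tsum_mul_left)
      (fun x c c' => by
        apply lp.ext; funext i
        show (∑' k, x k * (c + c') (k, i)) = vecMul x c i + vecMul x c' i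
        simp only [lp.coeFn_add, Pi.add_apply, mul_add]
        exact Summable.tsum_add (rrow_summable x c i) (rrow_summable x c' i))
      (fun s x c => by
        apply lp.ext; funext i
        show (∑' k, x k * (s • c) (k, i)) = (s • vecMul x c) i
        simp only [lp.coeFn_smul, Pi.smul_apply, smul_eq_mul]
        rw [show (fun k => x k * (s * c (k, i))) = fun k => s * (x k * c (k, i)) by
          funext k; ring]
        exact tsum_mul_left))
    1 (fun x c => by simpa using vecMul_norm x c)

lemma lActL_apply (c : L1 (I × I)) (x : L1 I) (i : I) :
    lActL c x i = ∑' k, c (i, k) * x k := rfl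

lemma rActL_apply (x : L1 I) (c : L1 (I × I)) (i : I) :
    rActL x c i = ∑' k, x k * c (k, i) := rfl

end act

/-! ### The scalar pairing -/

section pairing
variable {I : Type}

lemma pair_summable_norm (a b : L1 I) : Summable fun i => ‖a i * b i‖ :=
  Summable.of_nonneg_of_le (fun i => norm_nonneg _)
    (fun i => by rw [norm_mul]; exact mul_le_mul_of_nonneg_left (L1.apply_le_norm b i) (norm_nonneg _))
    ((L1.summable_norm a).mul_right ‖b‖)

lemma pair_summable (a b : L1 I) : Summable fun i => a i * b i :=
  (pair_summable_norm a b).of_norm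

noncomputable def pairB : L1 I →ₗ[ℂ] L1 I →ₗ[ℂ] ℂ :=
  LinearMap.mk₂ ℂ (fun a b => ∑' i, a i * b i)
    (fun a a' b => by
      simp only [lp.coeFn_add, Pi.add_apply, add_mul]
      exact Summable.tsum_add (pair_summable a b) (pair_summable a' b))
    (fun s a b => by
      simp only [lp.coeFn_smul, Pi.smul_apply, smul_eq_mul, mul_assoc]
      exact tsum_mul_left)
    (fun a b b' => by
      simp only [lp.coeFn_add, Pi.add_apply, mul_add]
      exact Summable.tsum_add (pair_summable a b) (pair_summable a b'))
    (fun s a b => by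
      simp only [lp.coeFn_smul, Pi.smul_apply, smul_eq_mul]
      rw [show (fun i => (a : I → ℂ) i * (s * b i)) = fun i => s * (a i * b i) by
        funext i; ring]
      exact tsum_mul_left)

lemma pairB_apply (a b : L1 I) : pairB a b = ∑' i, a i * b i := rfl

lemma pairB_bound (a b : L1 I) : ‖pairB a b‖ ≤ ‖a‖ * ‖b‖ := by
  refine (norm_tsum_le_tsum_norm (pair_summable_norm a b)).trans ?_
  calc ∑' i, ‖a i * b i‖ ≤ ∑' i, ‖a i‖ * ‖b‖ := by
        refine Summable.tsum_le_tsum (fun i => by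
          rw [norm_mul]
          exact mul_le_mul_of_nonneg_left (L1.apply_le_norm b i) (norm_nonneg _))
          (pair_summable_norm a b) ((L1.summable_norm a).mul_right ‖b‖)
    _ = ‖a‖ * ‖b‖ := by rw [tsum_mul_right, ← L1.norm_eq_tsum]

/-- The balancing identity for the scalar pairing. -/
lemma pairB_balance (x : L1 I) (c : L1 (I × I)) (y : L1 I) :
    pairB (rActL x c) y = pairB x (lActL c y) := by
  have hGs : Summable fun p : I × I => ‖x p.1 * c p * y p.2‖ := by
    refine Summable.of_nonneg_of_le (fun p => norm_nonneg _) (fun p => ?_)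
      ((rsummable_base x c).mul_right ‖y‖)
    rw [norm_mul, norm_mul]
    exact mul_le_mul_of_nonneg_left (L1.apply_le_norm y p.2) (by positivity)
  have hG : Summable fun p : I × I => x p.1 * c p * y p.2 := hGs.of_norm
  have hGswap : Summable fun p : I × I => x p.2 * c p.swap * y p.1 :=
    ((Equiv.prodComm I I).summable_iff).mpr hG
  calc pairB (rActL x c) y
      = ∑' i, (∑' k, x k * c (k, i)) * y i := rfl
    _ = ∑' i, ∑' k, x k * c (k, i) * y i := by
        exact tsum_congr fun i => tsum_mul_right.symm
    _ = ∑' p : I × I, x p.2 * c p.swap * y p.1 :=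
        (Summable.tsum_prod' hGswap (fun i => hGswap.prod_factor i)).symm
    _ = ∑' p : I × I, x p.1 * c p * y p.2 :=
        (Equiv.prodComm I I).tsum_eq (fun p : I × I => x p.1 * c p * y p.2)
    _ = ∑' i, ∑' k, x i * c (i, k) * y k :=
        Summable.tsum_prod' hG (fun i => hG.prod_factor i)
    _ = ∑' i, x i * ∑' k, c (i, k) * y k := by
        refine tsum_congr fun i => ?_
        rw [show (fun k => x i * c (i, k) * y k) = fun k => x i * (c (i, k) * y k) by
          funext k; ring]
        exact tsum_mul_left
    _ = pairB x (lActL c y) := rfl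

end pairing

/-! ### projNorm facts -/

section proj
variable {E F : Type} [SeminormedAddCommGroup E] [NormedSpace ℂ E]
    [SeminormedAddCommGroup F] [NormedSpace ℂ F]

lemma exists_rep (z : E ⊗[ℂ] F) : ∃ (n : ℕ) (x : Fin n → E) (y : Fin n → F),
    z = ∑ i, x i ⊗ₜ[ℂ] y i := by
  induction z using TensorProduct.induction_on with
  | zero => exact ⟨0, ![], ![], by simp⟩
  | tmul a b => exact ⟨1, fun _ => a, fun _ => b, by simp⟩
  | add z w hz hw =>
    obtain ⟨n, x, y, rfl⟩ := hz
    obtain ⟨m, x', y', rfl⟩ := hw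
    refine ⟨n + m, Fin.append x x', Fin.append y y', ?_⟩
    rw [Fin.sum_univ_add]
    simp [Fin.append_left, Fin.append_right]

lemma rep_nonneg (z : E ⊗[ℂ] F) {r : ℝ}
    (hr : r ∈ {r : ℝ | ∃ (n : ℕ) (x : Fin n → E) (y : Fin n → F),
      z = ∑ i, x i ⊗ₜ[ℂ] y i ∧ r = ∑ i, ‖x i‖ * ‖y i‖}) : 0 ≤ r := by
  obtain ⟨n, x, y, -, rfl⟩ := hr
  exact Finset.sum_nonneg fun i _ => mul_nonneg (norm_nonneg _) (norm_nonneg _)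

lemma projNorm_tmul_le (a : E) (b : F) : projNorm (a ⊗ₜ[ℂ] b) ≤ ‖a‖ * ‖b‖ := by
  apply csInf_le
  · exact ⟨0, fun r hr => rep_nonneg _ hr⟩
  · exact ⟨1, fun _ => a, fun _ => b, by simp, by simp⟩

lemma lift_le_projNorm {G : Type} [SeminormedAddCommGroup G] [NormedSpace ℂ G]
    (Ψ : E →ₗ[ℂ] F →ₗ[ℂ] G) (hΨ : ∀ a b, ‖Ψ a b‖ ≤ ‖a‖ * ‖b‖) (z : E ⊗[ℂ] F) :
    ‖TensorProduct.lift Ψ z‖ ≤ projNorm z := by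
  apply le_csInf
  · obtain ⟨n, x, y, hz⟩ := exists_rep z
    exact ⟨∑ i, ‖x i‖ * ‖y i‖, n, x, y, hz, rfl⟩
  · rintro r ⟨n, x, y, rfl, rfl⟩
    rw [map_sum]
    refine (norm_sum_le _ _).trans (Finset.sum_le_sum fun i _ => ?_)
    simpa using hΨ (x i) (y i)

end proj

set_option maxHeartbeats 1000000 in
set_option synthInstance.maxHeartbeats 400000 in
/-- The bounded functional `ν̄ : ℓ¹(I) ⊗̂ ℓ¹(I) → ℂ` determined by
`ν̄(a ⊗ b) = ∑_i a(i) b(i)` is nonzero and its kernel is the closed linear span `N`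
of the `M_I`-balancing relations; consequently the induced map
`ν : ℓ¹(I) ⊗̂_{M_I} ℓ¹(I) → ℂ` is an isomorphism of Banach spaces. -/
theorem brandt_morita_stmt2 (I : Type) [Nonempty I] :
    ∃ (lAct : L1 (I × I) →L[ℂ] L1 I →L[ℂ] L1 I)
      (rAct : L1 I →L[ℂ] L1 (I × I) →L[ℂ] L1 I),
      (∀ (a : L1 (I × I)) (x : L1 I) (i : I), lAct a x i = ∑' k : I, a (i, k) * x k) ∧
      (∀ (x : L1 I) (a : L1 (I × I)) (i : I), rAct x a i = ∑' k : I, x k * a (k, i)) ∧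
      ∀ (T : Type) [NormedAddCommGroup T] [NormedSpace ℂ T]
        (φ : L1 I →ₗ[ℂ] L1 I →ₗ[ℂ] T), IsProjTensor (L1 I) (L1 I) T φ →
        (∃ nubar : T →L[ℂ] ℂ,
          (∀ a b : L1 I, nubar (φ a b) = ∑' i : I, a i * b i) ∧
          nubar ≠ 0 ∧
          LinearMap.ker (nubar : T →ₗ[ℂ] ℂ) = balancer φ (fun x a => rAct x a) (fun a y => lAct a y)) ∧
        (∃ nu : (T ⧸ balancer φ (fun x a => rAct x a) (fun a y => lAct a y)) ≃L[ℂ] ℂ,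
          ∀ a b : L1 I, nu (Submodule.Quotient.mk (φ a b)) = ∑' i : I, a i * b i) := by
  classical
  refine ⟨lActL, rActL, fun a x i => rfl, fun x a i => rfl, ?_⟩
  intro T _ _ φ hφ
  -- basic bounds
  have hφb : ∀ (a b : L1 I), ‖φ a b‖ ≤ ‖a‖ * ‖b‖ := by
    intro a b
    rw [show φ a b = TensorProduct.lift φ (a ⊗ₜ[ℂ] b) from (TensorProduct.lift.tmul a b).symm,
      hφ.isometry]
    exact projNorm_tmul_le a b
  have hBle : ∀ z : L1 I ⊗[ℂ] L1 I, ‖TensorProduct.lift (pairB (I := I)) z‖ ≤ projNorm z :=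
    lift_le_projNorm _ pairB_bound
  have hwd : ∀ z w : L1 I ⊗[ℂ] L1 I, TensorProduct.lift φ z = TensorProduct.lift φ w →
      TensorProduct.lift (pairB (I := I)) z = TensorProduct.lift (pairB (I := I)) w := by
    intro z w h
    have h0 : TensorProduct.lift φ (z - w) = 0 := by rw [map_sub, h, sub_self]
    have h1 : ‖TensorProduct.lift (pairB (I := I)) (z - w)‖ ≤ 0 := by
      calc ‖TensorProduct.lift (pairB (I := I)) (z - w)‖ ≤ projNorm (z - w) := hBle _
        _ = ‖TensorProduct.lift φ (z - w)‖ := (hφ.isometry _).symm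
        _ = 0 := by rw [h0, norm_zero]
    have h2 : TensorProduct.lift (pairB (I := I)) (z - w) = 0 :=
      norm_le_zero_iff.mp h1
    have h3 : TensorProduct.lift (pairB (I := I)) z - TensorProduct.lift (pairB (I := I)) w = 0 := by
      rw [← map_sub]; exact h2
    exact sub_eq_zero.mp h3
  -- the functional on the range of lift φ
  set S : Subspace ℂ T := LinearMap.range (TensorProduct.lift φ) with hS
  have hmem : ∀ s : S, ∃ z, TensorProduct.lift φ z = (s : T) := fun s =>
    LinearMap.mem_range.mp s.2
  let g0 : S → ℂ := fun s => TensorProduct.lift (pairB (I := I)) (hmem s).choose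
  have hkey : ∀ (s : S) (z : L1 I ⊗[ℂ] L1 I), TensorProduct.lift φ z = (s : T) →
      g0 s = TensorProduct.lift (pairB (I := I)) z := by
    intro s z hz
    exact hwd _ _ (by rw [(hmem s).choose_spec, hz])
  let g : S →ₗ[ℂ] ℂ :=
    { toFun := g0
      map_add' := by
        intro s t
        show g0 (s + t) = g0 s + g0 t
        rw [hkey (s + t) ((hmem s).choose + (hmem t).choose)
          (by rw [map_add, (hmem s).choose_spec, (hmem t).choose_spec]; rfl),
          hkey s (hmem s).choose (hmem s).choose_spec,
          hkey t (hmem t).choose (hmem t).choose_spec, map_add]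
      map_smul' := by
        intro m s
        show g0 (m • s) = m • g0 s
        rw [hkey (m • s) (m • (hmem s).choose)
          (by rw [map_smul, (hmem s).choose_spec]; rfl),
          hkey s (hmem s).choose (hmem s).choose_spec, map_smul] }
  have hgb : ∀ s : S, ‖g s‖ ≤ 1 * ‖s‖ := by
    intro s
    rw [one_mul]
    show ‖g0 s‖ ≤ ‖s‖
    calc ‖TensorProduct.lift (pairB (I := I)) (hmem s).choose‖
        ≤ projNorm (hmem s).choose := hBle _
      _ = ‖TensorProduct.lift φ (hmem s).choose‖ := (hφ.isometry _).symm
      _ = ‖(s : T)‖ := by rw [(hmem s).choose_spec]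
      _ = ‖s‖ := rfl
  obtain ⟨nubar, hnb, -⟩ := exists_extension_norm_eq S (g.mkContinuous 1 hgb)
  have hform : ∀ a b : L1 I, nubar (φ a b) = ∑' i, a i * b i := by
    intro a b
    have hmem' : φ a b ∈ S := ⟨a ⊗ₜ[ℂ] b, rfl⟩
    have h1 : nubar (φ a b) = g0 ⟨φ a b, hmem'⟩ := hnb ⟨φ a b, hmem'⟩
    rw [h1, hkey ⟨φ a b, hmem'⟩ (a ⊗ₜ[ℂ] b) rfl]
    rfl
  -- the distinguished element e
  set i₀ : I := Classical.arbitrary I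
  set e : T := φ (delta i₀) (delta i₀) with he
  have hnue : nubar e = 1 := by
    rw [he, hform]
    rw [tsum_eq_single i₀ (fun j hj => by simp [delta_apply, hj])]
    simp [delta_apply]
  set N : Submodule ℂ T := balancer φ (fun x a => rActL x a) (fun a y => lActL a y) with hN
  set genSet : Set T :=
    {z : T | ∃ (x : L1 I) (a : L1 (I × I)) (y : L1 I),
      z = φ (rActL x a) y - φ x (lActL a y)} with hgen
  have hNdef : N = (Submodule.span ℂ genSet).topologicalClosure := rfl
  -- N ⊆ ker nubar
  have hNker : N ≤ LinearMap.ker (nubar : T →ₗ[ℂ] ℂ) := by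
    rw [hNdef]
    refine Submodule.topologicalClosure_minimal _ ?_ ?_
    · rw [Submodule.span_le]
      rintro z ⟨x, c, y, rfl⟩
      simp only [SetLike.mem_coe, LinearMap.mem_ker, map_sub, ContinuousLinearMap.coe_coe, hform]
      have := pairB_balance x c y
      rw [pairB_apply, pairB_apply] at this
      rw [this, sub_self]
    · exact ContinuousLinearMap.isClosed_ker nubar
  -- elementary membership
  have span_mem1 : ∀ (i : I) (b : L1 I),
      φ (delta i) b - b i • e ∈ Submodule.span ℂ genSet := by
    intro i b
    set c : L1 (I × I) := delta (i₀, i) with hc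
    have h1 : rActL (delta i₀) c = delta i := by
      apply lp.ext; funext m
      show (∑' k, (delta i₀ : L1 I) k * c (k, m)) = delta i m
      rw [tsum_eq_single i₀ (fun j hj => by simp [delta_apply, hj])]
      by_cases h : m = i <;>
        simp [delta_apply, hc, Prod.ext_iff, h]
    have h2 : lActL c b = b i • delta i₀ := by
      apply lp.ext; funext m
      show (∑' k, c (m, k) * b k) = (b i • delta i₀) m
      rw [tsum_eq_single i (fun j hj => by simp [delta_apply, hc, Prod.ext_iff, hj])]
      rw [lp.coeFn_smul, Pi.smul_apply, smul_eq_mul]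
      by_cases h : m = i₀ <;> simp [delta_apply, hc, Prod.ext_iff, h, mul_comm]
    have hg : φ (rActL (delta i₀) c) b - φ (delta i₀) (lActL c b) ∈ genSet :=
      ⟨delta i₀, c, b, rfl⟩
    have : φ (rActL (delta i₀) c) b - φ (delta i₀) (lActL c b) ∈ Submodule.span ℂ genSet :=
      Submodule.subset_span hg
    rw [h1, h2] at this
    rwa [(φ (delta i₀)).map_smul] at this
  -- tensor membership in N
  have span_mem2 : ∀ a b : L1 I, φ a b - (∑' i, a i * b i) • e ∈ N := by
    intro a b
    set φb : L1 I →L[ℂ] T := LinearMap.mkContinuous (φ.flip b) ‖b‖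
      (fun x => by rw [mul_comm]; exact hφb x b) with hφbdef
    have hφb_app : ∀ x : L1 I, φb x = φ x b := fun x => rfl
    have hsum1 : HasSum (fun i => a i • φ (delta i) b) (φ a b) := by
      have := (hasSum_delta a).mapL φb
      refine this.congr_fun fun i => ?_
      rw [map_smul, hφb_app]
    have hsum2 : HasSum (fun i => (a i * b i) • e) ((∑' i, a i * b i) • e) :=
      (pair_summable a b).hasSum.smul_const e
    have hsum3 : HasSum (fun i => a i • φ (delta i) b - (a i * b i) • e)
        (φ a b - (∑' i, a i * b i) • e) := hsum1.sub hsum2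
    have hterm : ∀ i, a i • φ (delta i) b - (a i * b i) • e ∈ Submodule.span ℂ genSet := by
      intro i
      have : a i • φ (delta i) b - (a i * b i) • e = a i • (φ (delta i) b - b i • e) := by
        rw [smul_sub, smul_smul]
      rw [this]
      exact Submodule.smul_mem _ _ (span_mem1 i b)
    have : φ a b - (∑' i, a i * b i) • e ∈
        closure ((Submodule.span ℂ genSet : Submodule ℂ T) : Set T) :=
      mem_closure_of_tendsto hsum3
        (Filter.Eventually.of_forall fun s => Submodule.sum_mem _ fun i _ => hterm i)
    exact this
  -- every t satisfies t - nubar t • e ∈ N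
  have hΨ : ∀ t : T, t - nubar t • e ∈ N := by
    set Ψ : T →L[ℂ] T := ContinuousLinearMap.id ℂ T - nubar.smulRight e with hΨdef
    have hΨapp : ∀ t : T, Ψ t = t - nubar t • e := fun t => rfl
    set M : Submodule ℂ T := N.comap (Ψ : T →ₗ[ℂ] T) with hM
    have hMclosed : IsClosed (M : Set T) := by
      have : (M : Set T) = Ψ ⁻¹' (N : Set T) := rfl
      rw [this]
      exact (Submodule.isClosed_topologicalClosure _).preimage Ψ.continuous
    have helem : ∀ a b : L1 I, φ a b ∈ M := by
      intro a b
      show Ψ (φ a b) ∈ N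
      rw [hΨapp, hform]
      exact span_mem2 a b
    have hz : ∀ z : L1 I ⊗[ℂ] L1 I, TensorProduct.lift φ z ∈ M := by
      intro z
      induction z using TensorProduct.induction_on with
      | zero => rw [map_zero]; exact M.zero_mem
      | tmul a b => exact helem a b
      | add z w hz hw => rw [map_add]; exact M.add_mem hz hw
    have huniv : ∀ t : T, t ∈ M := by
      intro t
      have hclos : closure (Set.range (TensorProduct.lift φ)) = Set.univ :=
        hφ.dense.closure_range
      have hsub : Set.range ⇑(TensorProduct.lift φ) ⊆ (M : Set T) := by
        rintro _ ⟨z, rfl⟩; exact hz z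
      have : closure (Set.range ⇑(TensorProduct.lift φ)) ⊆ (M : Set T) :=
        closure_minimal hsub hMclosed
      exact this (hclos ▸ Set.mem_univ t)
    exact fun t => huniv t
  have hker : LinearMap.ker (nubar : T →ₗ[ℂ] ℂ) = N := by
    refine le_antisymm ?_ hNker
    intro t ht
    have h0 : nubar t = 0 := ht
    have := hΨ t
    rwa [h0, zero_smul, sub_zero] at this
  have hnz : nubar ≠ 0 := by
    intro h
    rw [h] at hnue
    simp at hnue
  refine ⟨⟨nubar, hform, hnz, hker⟩, ?_⟩
  -- quotient isomorphism
  have hle : N ≤ LinearMap.ker (nubar : T →ₗ[ℂ] ℂ) := hNker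
  set nul : (T ⧸ N) →ₗ[ℂ] ℂ := N.liftQ (nubar : T →ₗ[ℂ] ℂ) hle with hnul
  have hnul_mk : ∀ t : T, nul (Submodule.Quotient.mk t) = nubar t := fun t => rfl
  have hbound : ∀ q : T ⧸ N, ‖nul q‖ ≤ (‖nubar‖ + 1) * ‖q‖ := by
    intro q
    refine le_of_forall_pos_le_add ?_
    intro ε hε
    have hδ : 0 < ε / (‖nubar‖ + 1) := by positivity
    obtain ⟨m, hm, hmlt⟩ := Submodule.Quotient.norm_mk_lt q hδ
    rw [← hm] at hmlt ⊢
    calc ‖nul (Submodule.Quotient.mk m)‖ = ‖nubar m‖ := by rw [hnul_mk]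
      _ ≤ ‖nubar‖ * ‖m‖ := nubar.le_opNorm m
      _ ≤ (‖nubar‖ + 1) * ‖m‖ := by
          have := norm_nonneg m; nlinarith [norm_nonneg nubar]
      _ ≤ (‖nubar‖ + 1) * (‖(Submodule.Quotient.mk m : T ⧸ N)‖ + ε / (‖nubar‖ + 1)) := by
          have h1 : (0:ℝ) < ‖nubar‖ + 1 := by positivity
          exact mul_le_mul_of_nonneg_left hmlt.le h1.le
      _ = (‖nubar‖ + 1) * ‖(Submodule.Quotient.mk m : T ⧸ N)‖ + ε := by
          field_simp
  set nuc : (T ⧸ N) →L[ℂ] ℂ := nul.mkContinuous (‖nubar‖ + 1) hbound with hnuc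
  have hnuc_mk : ∀ t : T, nuc (Submodule.Quotient.mk t) = nubar t := fun t => rfl
  set ι : ℂ →L[ℂ] (T ⧸ N) :=
    (ContinuousLinearMap.id ℂ ℂ).smulRight (Submodule.Quotient.mk e) with hι
  have hι_app : ∀ c : ℂ, ι c = c • (Submodule.Quotient.mk e : T ⧸ N) := fun c => rfl
  have hleft : Function.LeftInverse ι nuc := by
    intro q
    obtain ⟨t, rfl⟩ := Submodule.Quotient.mk_surjective N q
    rw [hnuc_mk, hι_app, ← Submodule.Quotient.mk_smul, Submodule.Quotient.eq]
    have := hΨ t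
    rw [show nubar t • e - t = -(t - nubar t • e) from (neg_sub _ _).symm]
    exact N.neg_mem this
  have hright : Function.RightInverse ι nuc := by
    intro c
    rw [hι_app, ← Submodule.Quotient.mk_smul, hnuc_mk, map_smul, hnue]
    simp
  refine ⟨ContinuousLinearEquiv.equivOfInverse nuc ι hleft hright, ?_⟩
  intro a b
  show nuc (Submodule.Quotient.mk (φ a b)) = ∑' i, a i * b i
  rw [hnuc_mk, hform]
end
end

section
/- Let I be a nonempty set. Then the Banach algebra M_I is self-induced: the multiplication map M_I ⊗̂_{M_I} M_I → M_I, a ⊗ b ↦ ab, is an isomorphism of M_I-bimodules. -/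
open scoped TensorProduct BigOperators ENNReal
open Filter

noncomputable section

/-- A left Banach `A`-module `(E, l)` is `A`-induced: for every realization `T` of
`A ⊗̂ E`, the canonical map `A ⊗̂_A E → E`, `a ⊗ x ↦ a·x`, is a topological
isomorphism. -/
def LeftInduced {A E : Type} [SeminormedAddCommGroup A] [NormedSpace ℂ A]
    [SeminormedAddCommGroup E] [NormedSpace ℂ E]
    (mulA : A →L[ℂ] A →L[ℂ] A) (l : A →L[ℂ] E →L[ℂ] E) : Prop :=
  ∀ (T : Type) [SeminormedAddCommGroup T] [NormedSpace ℂ T]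
    (φ : A →ₗ[ℂ] E →ₗ[ℂ] T), IsProjTensor A E T φ →
    ∃ e : (T ⧸ balancer φ (fun a b => mulA a b) (fun a x => l a x)) ≃L[ℂ] E,
      ∀ (a : A) (x : E), e (Submodule.Quotient.mk (φ a x)) = l a x

/-- A right Banach `A`-module `(E, r)` is `A`-induced. -/
def RightInduced {A E : Type} [SeminormedAddCommGroup A] [NormedSpace ℂ A]
    [SeminormedAddCommGroup E] [NormedSpace ℂ E]
    (mulA : A →L[ℂ] A →L[ℂ] A) (r : E →L[ℂ] A →L[ℂ] E) : Prop :=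
  ∀ (T : Type) [SeminormedAddCommGroup T] [NormedSpace ℂ T]
    (φ : E →ₗ[ℂ] A →ₗ[ℂ] T), IsProjTensor E A T φ →
    ∃ e : (T ⧸ balancer φ (fun x a => r x a) (fun a b => mulA a b)) ≃L[ℂ] E,
      ∀ (x : E) (a : A), e (Submodule.Quotient.mk (φ x a)) = r x a

/-- A Banach algebra `(A, mul)` is self-induced: the multiplication map
`A ⊗̂_A A → A` is an isomorphism of `A`-bimodules. -/
def SelfInduced {A : Type} [SeminormedAddCommGroup A] [NormedSpace ℂ A]
    (mulA : A →L[ℂ] A →L[ℂ] A) : Prop :=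
  ∀ (T : Type) [SeminormedAddCommGroup T] [NormedSpace ℂ T]
    (φ : A →ₗ[ℂ] A →ₗ[ℂ] T), IsProjTensor A A T φ →
    ∃ e : (T ⧸ balancer φ (fun a b => mulA a b) (fun a b => mulA a b)) ≃L[ℂ] A,
      (∀ a b : A, e (Submodule.Quotient.mk (φ a b)) = mulA a b) ∧
      (∀ c a b : A, e (Submodule.Quotient.mk (φ (mulA c a) b))
          = mulA c (e (Submodule.Quotient.mk (φ a b)))) ∧
      (∀ a b c : A, e (Submodule.Quotient.mk (φ a (mulA b c)))
          = mulA (e (Submodule.Quotient.mk (φ a b))) c)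

/-- `(E, l, r)` is a Banach bimodule: left over `(A, mulL)`, right over `(B, mulR)`. -/
def IsBimoduleLaw {A B E : Type} [SeminormedAddCommGroup A] [NormedSpace ℂ A]
    [SeminormedAddCommGroup B] [NormedSpace ℂ B]
    [SeminormedAddCommGroup E] [NormedSpace ℂ E]
    (mulL : A →L[ℂ] A →L[ℂ] A) (mulR : B →L[ℂ] B →L[ℂ] B)
    (l : A →L[ℂ] E →L[ℂ] E) (r : E →L[ℂ] B →L[ℂ] E) : Prop :=
  (∀ (a a' : A) (x : E), l (mulL a a') x = l a (l a' x)) ∧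
  (∀ (x : E) (b b' : B), r (r x b) b' = r x (mulR b b')) ∧
  (∀ (a : A) (x : E) (b : B), r (l a x) b = l a (r x b))

/-! ### Auxiliary material -/

open scoped NNReal Classical

namespace BM
variable {X : Type} {I : Type}

lemma summable_norm (f : L1 X) : Summable fun x => ‖f x‖ := by
  have h := lp.memℓp f
  have h1 : (0:ℝ) < (1:ℝ≥0∞).toReal := by norm_num
  simpa using h.summable h1

lemma summable_nnnorm (f : L1 X) : Summable fun x => ‖f x‖₊ :=
  NNReal.summable_coe.mp (by simpa [coe_nnnorm] using summable_norm f)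

lemma norm_eq (f : L1 X) : ‖f‖ = ∑' x, ‖f x‖ := by
  have h1 : (0:ℝ) < (1:ℝ≥0∞).toReal := by norm_num
  simpa using lp.norm_eq_tsum_rpow h1 f

lemma apply_le (f : L1 X) (x : X) : ‖f x‖ ≤ ‖f‖ :=
  lp.norm_apply_le_norm one_ne_zero f x

open Classical in
lemma delta_apply (x y : X) : (delta x : L1 X) y = if y = x then 1 else 0 := by
  simp [delta, lp.single_apply, Pi.single_apply]

lemma norm_delta (x : X) : ‖(delta x : L1 X)‖ = 1 := by
  have h1 : (0:ℝ) < (1:ℝ≥0∞).toReal := by norm_num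
  have := lp.norm_single (E := fun _ : X => ℂ) zero_lt_one x (1:ℂ)
  simpa [delta] using this

lemma smul_delta (f : L1 X) (x : X) : f x • (delta x : L1 X) = lp.single 1 x (f x) := by
  ext y
  by_cases h : y = x
  · subst h; simp [delta, lp.single_apply]
  · simp [delta, lp.single_apply, h]

lemma hasSum_delta (f : L1 X) : HasSum (fun x => f x • (delta x : L1 X)) f := by
  have := lp.hasSum_single (p := 1) (E := fun _ : X => ℂ) (by norm_num) f
  simpa [smul_delta] using this

/-- The index shuffle `((i,j),k) ↦ ((i,k),j)`. -/
def sw (I : Type) : ((I × I) × I) ≃ ((I × I) × I) where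
  toFun q := ((q.1.1, q.2), q.1.2)
  invFun q := ((q.1.1, q.2), q.1.2)
  left_inv q := rfl
  right_inv q := rfl

lemma conv_summable (a b : L1 (I × I)) :
    Summable fun q : (I × I) × I => ‖a (q.1.1, q.2)‖ * ‖b (q.2, q.1.2)‖ := by
  have key : (∑' q : (I × I) × I,
      (‖a (q.1.1, q.2)‖₊ : ℝ≥0∞) * (‖b (q.2, q.1.2)‖₊ : ℝ≥0∞)) ≠ (⊤ : ℝ≥0∞) := by
    have hb : ∀ k : I, (∑' j : I, (‖b (k, j)‖₊ : ℝ≥0∞)) ≤ ∑' q : I × I, (‖b q‖₊ : ℝ≥0∞) := by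
      intro k
      exact ENNReal.tsum_comp_le_tsum_of_injective (Prod.mk_right_injective k) _
    have step1 : (∑' q : (I × I) × I,
        (‖a (q.1.1, q.2)‖₊ : ℝ≥0∞) * (‖b (q.2, q.1.2)‖₊ : ℝ≥0∞))
        = ∑' p : I × I, ∑' j : I, ((‖a p‖₊ : ℝ≥0∞) * (‖b (p.2, j)‖₊ : ℝ≥0∞)) := by
      rw [← Equiv.tsum_eq (sw I) (fun q : (I × I) × I =>
        (‖a (q.1.1, q.2)‖₊ : ℝ≥0∞) * (‖b (q.2, q.1.2)‖₊ : ℝ≥0∞))]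
      rw [ENNReal.tsum_prod']
      rfl
    rw [step1]
    have step2 : (∑' p : I × I, ∑' j : I, ((‖a p‖₊ : ℝ≥0∞) * (‖b (p.2, j)‖₊ : ℝ≥0∞)))
        ≤ (∑' p : I × I, (‖a p‖₊ : ℝ≥0∞)) * (∑' q : I × I, (‖b q‖₊ : ℝ≥0∞)) := by
      rw [← ENNReal.tsum_mul_right]
      refine ENNReal.tsum_le_tsum fun p => ?_
      rw [ENNReal.tsum_mul_left]
      exact mul_le_mul_right (hb p.2) _
    refine ne_top_of_le_ne_top ?_ step2
    exact ENNReal.mul_ne_top (ENNReal.tsum_coe_ne_top_iff_summable.2 (summable_nnnorm a))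
      (ENNReal.tsum_coe_ne_top_iff_summable.2 (summable_nnnorm b))
  have key2 : (∑' q : (I × I) × I,
      ((‖a (q.1.1, q.2)‖₊ * ‖b (q.2, q.1.2)‖₊ : ℝ≥0) : ℝ≥0∞)) ≠ (⊤ : ℝ≥0∞) := by
    simpa [ENNReal.coe_mul] using key
  have h2 := ENNReal.tsum_coe_ne_top_iff_summable.1 key2
  have h3 := NNReal.summable_coe.2 h2
  simpa [NNReal.coe_mul, coe_nnnorm] using h3

lemma inner_summable_norm (a b : L1 (I × I)) (i j : I) :
    Summable fun k : I => ‖a (i, k)‖ * ‖b (k, j)‖ :=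
  (conv_summable a b).prod_factor (i, j)

lemma inner_summable (a b : L1 (I × I)) (i j : I) :
    Summable fun k : I => a (i, k) * b (k, j) :=
  Summable.of_norm (by simpa [norm_mul] using inner_summable_norm a b i j)

def convFun (a b : L1 (I × I)) : I × I → ℂ := fun p => ∑' k, a (p.1, k) * b (k, p.2)

lemma convFun_norm_le (a b : L1 (I × I)) (p : I × I) :
    ‖convFun a b p‖ ≤ ∑' k, ‖a (p.1, k)‖ * ‖b (k, p.2)‖ := by
  refine (norm_tsum_le_tsum_norm ?_).trans_eq (by simp [norm_mul])
  simpa [norm_mul] using inner_summable_norm a b p.1 p.2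

lemma outer_summable (a b : L1 (I × I)) :
    Summable fun p : I × I => ∑' k, ‖a (p.1, k)‖ * ‖b (k, p.2)‖ :=
  (conv_summable a b).prod

lemma summable_convFun (a b : L1 (I × I)) : Summable fun p => ‖convFun a b p‖ :=
  Summable.of_nonneg_of_le (fun _ => norm_nonneg _) (convFun_norm_le a b)
    (outer_summable a b)

lemma tsum_outer_le (a b : L1 (I × I)) :
    (∑' p : I × I, ∑' k, ‖a (p.1, k)‖ * ‖b (k, p.2)‖) ≤ ‖a‖ * ‖b‖ := by
  have hsum := conv_summable a b
  have h1 : (∑' p : I × I, ∑' k, ‖a (p.1, k)‖ * ‖b (k, p.2)‖)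
      = ∑' q : (I × I) × I, ‖a (q.1.1, q.2)‖ * ‖b (q.2, q.1.2)‖ :=
    (Summable.tsum_prod' hsum (fun p => hsum.prod_factor p)).symm
  have h2 : (∑' q : (I × I) × I, ‖a (q.1.1, q.2)‖ * ‖b (q.2, q.1.2)‖)
      = ∑' r : (I × I) × I, ‖a r.1‖ * ‖b (r.1.2, r.2)‖ := by
    rw [← Equiv.tsum_eq (sw I) (fun q : (I × I) × I => ‖a (q.1.1, q.2)‖ * ‖b (q.2, q.1.2)‖)]
    rfl
  have hsumr : Summable fun r : (I × I) × I => ‖a r.1‖ * ‖b (r.1.2, r.2)‖ := by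
    have := hsum.comp_injective (sw I).injective
    simpa [sw, Function.comp_def] using this
  have h3 : (∑' r : (I × I) × I, ‖a r.1‖ * ‖b (r.1.2, r.2)‖)
      = ∑' p : I × I, ‖a p‖ * ∑' j, ‖b (p.2, j)‖ := by
    rw [Summable.tsum_prod' hsumr (fun p => hsumr.prod_factor p)]
    exact tsum_congr fun p => by simpa using tsum_mul_left (a := ‖a p‖) (f := fun j => ‖b (p.2, j)‖)
  have h4 : (∑' p : I × I, ‖a p‖ * ∑' j, ‖b (p.2, j)‖) ≤ ∑' p : I × I, ‖a p‖ * ‖b‖ := by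
    have hps : Summable fun p : I × I => ‖a p‖ * ∑' j, ‖b (p.2, j)‖ := by
      have := hsumr.prod
      simpa only [tsum_mul_left] using this
    refine Summable.tsum_le_tsum (fun p => ?_) hps ((summable_norm a).mul_right _)
    refine mul_le_mul_of_nonneg_left ?_ (norm_nonneg _)
    rw [norm_eq b]
    refine Summable.tsum_le_tsum_of_inj (fun j => (p.2, j)) (Prod.mk_right_injective p.2)
      (fun _ _ => norm_nonneg _) (fun j => le_rfl)
      ((summable_norm b).comp_injective (Prod.mk_right_injective p.2)) (summable_norm b)
  calc (∑' p : I × I, ∑' k, ‖a (p.1, k)‖ * ‖b (k, p.2)‖)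
      = _ := h1
    _ = _ := h2
    _ = _ := h3
    _ ≤ _ := h4
    _ = ‖a‖ * ‖b‖ := by rw [tsum_mul_right, ← norm_eq a]

lemma memℓp_convFun (a b : L1 (I × I)) : Memℓp (convFun a b) 1 := by
  apply memℓp_gen
  simpa using summable_convFun a b

def convL1 (a b : L1 (I × I)) : L1 (I × I) := ⟨convFun a b, memℓp_convFun a b⟩

lemma convL1_apply (a b : L1 (I × I)) (p : I × I) :
    convL1 a b p = ∑' k, a (p.1, k) * b (k, p.2) := rfl

lemma norm_convL1_le (a b : L1 (I × I)) : ‖convL1 a b‖ ≤ ‖a‖ * ‖b‖ := by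
  rw [norm_eq]
  refine le_trans (Summable.tsum_le_tsum (fun p => convFun_norm_le a b p)
    (summable_convFun a b) (outer_summable a b)) (tsum_outer_le a b)

lemma convL1_add_left (a a' b : L1 (I × I)) :
    convL1 (a + a') b = convL1 a b + convL1 a' b := by
  apply lp.ext
  funext p
  simp only [convL1_apply, lp.coeFn_add, Pi.add_apply]
  rw [← Summable.tsum_add (inner_summable a b p.1 p.2) (inner_summable a' b p.1 p.2)]
  exact tsum_congr fun k => by ring

lemma convL1_smul_left (c : ℂ) (a b : L1 (I × I)) :
    convL1 (c • a) b = c • convL1 a b := by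
  apply lp.ext
  funext p
  simp only [convL1_apply, lp.coeFn_smul, Pi.smul_apply, smul_eq_mul]
  rw [← tsum_mul_left]
  exact tsum_congr fun k => by ring

lemma convL1_add_right (a b b' : L1 (I × I)) :
    convL1 a (b + b') = convL1 a b + convL1 a b' := by
  apply lp.ext
  funext p
  simp only [convL1_apply, lp.coeFn_add, Pi.add_apply]
  rw [← Summable.tsum_add (inner_summable a b p.1 p.2) (inner_summable a b' p.1 p.2)]
  exact tsum_congr fun k => by ring

lemma convL1_smul_right (c : ℂ) (a b : L1 (I × I)) :
    convL1 a (c • b) = c • convL1 a b := by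
  apply lp.ext
  funext p
  simp only [convL1_apply, lp.coeFn_smul, Pi.smul_apply, smul_eq_mul]
  rw [← tsum_mul_left]
  exact tsum_congr fun k => by ring

/-- The convolution bilinear map, as a bilinear `LinearMap`. -/
def mulMbil (I : Type) : L1 (I × I) →ₗ[ℂ] L1 (I × I) →ₗ[ℂ] L1 (I × I) :=
  LinearMap.mk₂ ℂ convL1 convL1_add_left convL1_smul_left
    convL1_add_right convL1_smul_right

/-- The convolution product on `ℓ¹(I × I)`, as a continuous bilinear map. -/
def mulM (I : Type) : L1 (I × I) →L[ℂ] L1 (I × I) →L[ℂ] L1 (I × I) :=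
  LinearMap.mkContinuous₂ (mulMbil I) 1
    (fun a b => by simpa [mulMbil] using norm_convL1_le a b)

lemma mulM_apply (a b : L1 (I × I)) (p : I × I) :
    mulM I a b p = ∑' k, a (p.1, k) * b (k, p.2) := rfl

lemma norm_mulM_le (a b : L1 (I × I)) : ‖mulM I a b‖ ≤ ‖a‖ * ‖b‖ :=
  norm_convL1_le a b

open Classical in
lemma mulM_delta_delta (p q : I × I) :
    mulM I (delta p) (delta q) =
      if p.2 = q.1 then delta (p.1, q.2) else (0 : L1 (I × I)) := by
  obtain ⟨i, j⟩ := p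
  obtain ⟨k, l⟩ := q
  apply lp.ext
  funext rs
  obtain ⟨r, s⟩ := rs
  have h1 : mulM I (delta (i, j)) (delta (k, l)) (r, s)
      = ∑' m, (delta (i, j) : L1 (I × I)) (r, m) * (delta (k, l) : L1 (I × I)) (m, s) :=
    rfl
  rw [h1]
  rw [tsum_eq_single j (fun m hm => by
    simp only [delta_apply, Prod.mk.injEq]
    rw [if_neg (by tauto)]
    ring)]
  by_cases hjk : j = k
  · subst hjk
    simp only [delta_apply, Prod.mk.injEq]
    by_cases hri : r = i
    · subst hri
      by_cases hsl : s = l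
      · subst hsl
        simp [delta_apply]
      · simp [delta_apply, hsl]
    · simp [delta_apply, hri]
  · simp [delta_apply, Prod.mk.injEq, hjk]

lemma summable_triple (a b c : L1 (I × I)) (i j : I) :
    Summable fun q : I × I => a (i, q.2) * b (q.2, q.1) * c (q.1, j) := by
  apply Summable.of_norm
  have hb : Summable fun q : I × I => (‖a‖ * ‖c‖) * ‖b (q.2, q.1)‖ := by
    apply Summable.mul_left
    exact ((summable_norm b).comp_injective (Equiv.prodComm I I).injective)
  refine Summable.of_nonneg_of_le (fun _ => norm_nonneg _) (fun q => ?_) hb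
  rw [norm_mul, norm_mul]
  calc ‖a (i, q.2)‖ * ‖b (q.2, q.1)‖ * ‖c (q.1, j)‖
      ≤ ‖a‖ * ‖b (q.2, q.1)‖ * ‖c‖ := by
        gcongr
        exacts [apply_le a _, apply_le c _]
    _ = (‖a‖ * ‖c‖) * ‖b (q.2, q.1)‖ := by ring

lemma mulM_assoc (a b c : L1 (I × I)) :
    mulM I (mulM I a b) c = mulM I a (mulM I b c) := by
  apply lp.ext
  funext p
  obtain ⟨i, j⟩ := p
  have hL : mulM I (mulM I a b) c (i, j)
      = ∑' k, (∑' l, a (i, l) * b (l, k)) * c (k, j) := rfl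
  have hR : mulM I a (mulM I b c) (i, j)
      = ∑' l, a (i, l) * ∑' k, b (l, k) * c (k, j) := rfl
  rw [hL, hR]
  have h2 : ∀ k, (∑' l, a (i, l) * b (l, k)) * c (k, j)
      = ∑' l, a (i, l) * b (l, k) * c (k, j) := fun k => tsum_mul_right.symm
  have h3 : ∀ l, a (i, l) * ∑' k, b (l, k) * c (k, j)
      = ∑' k, a (i, l) * (b (l, k) * c (k, j)) := fun l => tsum_mul_left.symm
  simp only [h2, h3]
  have hun : Summable (Function.uncurry fun l k => a (i, l) * b (l, k) * c (k, j)) := by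
    have h := (summable_triple a b c i j).prod_symm
    apply h.congr
    intro q
    rfl
  rw [Summable.tsum_comm' hun (fun l => hun.prod_factor l) (fun k => (hun.prod_symm).prod_factor k)]
  exact tsum_congr fun l => tsum_congr fun k => by ring

/-! #### Projective norm lemmas -/

lemma exists_rep {E F : Type} [AddCommGroup E] [Module ℂ E] [AddCommGroup F] [Module ℂ F]
    (z : E ⊗[ℂ] F) : ∃ (n : ℕ) (x : Fin n → E) (y : Fin n → F),
      z = ∑ i, x i ⊗ₜ[ℂ] y i := by
  obtain ⟨S, hS⟩ := TensorProduct.exists_finset z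
  refine ⟨S.card, fun i => (S.equivFin.symm i).1.1, fun i => (S.equivFin.symm i).1.2, ?_⟩
  rw [hS]
  rw [← Finset.sum_attach S (fun p => p.1 ⊗ₜ[ℂ] p.2)]
  exact (Equiv.sum_comp S.equivFin.symm (fun p : {x // x ∈ S} => p.1.1 ⊗ₜ[ℂ] p.1.2)).symm

lemma projNorm_tmul_le {E F : Type} [SeminormedAddCommGroup E] [NormedSpace ℂ E]
    [SeminormedAddCommGroup F] [NormedSpace ℂ F] (x : E) (y : F) :
    projNorm (x ⊗ₜ[ℂ] y) ≤ ‖x‖ * ‖y‖ := by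
  apply csInf_le
  · refine ⟨0, ?_⟩
    rintro r ⟨n, u, w, -, rfl⟩
    positivity
  · exact ⟨1, fun _ => x, fun _ => y, by simp, by simp⟩

lemma norm_lift_le_projNorm {E F G : Type} [SeminormedAddCommGroup E] [NormedSpace ℂ E]
    [SeminormedAddCommGroup F] [NormedSpace ℂ F] [SeminormedAddCommGroup G] [NormedSpace ℂ G]
    (B : E →ₗ[ℂ] F →ₗ[ℂ] G) (hB : ∀ x y, ‖B x y‖ ≤ ‖x‖ * ‖y‖) (z : E ⊗[ℂ] F) :
    ‖TensorProduct.lift B z‖ ≤ projNorm z := by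
  rw [projNorm]
  refine le_csInf ?_ ?_
  · obtain ⟨n, x, y, h⟩ := exists_rep z
    exact ⟨∑ i, ‖x i‖ * ‖y i‖, n, x, y, h, rfl⟩
  · rintro r ⟨n, x, y, rfl, rfl⟩
    rw [map_sum]
    refine (norm_sum_le _ _).trans (Finset.sum_le_sum fun i _ => ?_)
    simpa using hB (x i) (y i)

/-! #### Extension of continuous linear maps along a dense isometry, allowing
seminormed domains. -/

def extendCLM {E T F : Type} [SeminormedAddCommGroup E] [NormedSpace ℂ E]
    [SeminormedAddCommGroup T] [NormedSpace ℂ T] [NormedAddCommGroup F] [NormedSpace ℂ F]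
    [CompleteSpace F] (f : E →L[ℂ] F) (e : E →L[ℂ] T) (h_dense : DenseRange e)
    (h_e : IsUniformInducing e) : T →L[ℂ] F :=
  have cont := (uniformContinuous_uniformly_extend h_e h_dense f.uniformContinuous).continuous
  have eq := uniformly_extend_of_ind h_e h_dense f.uniformContinuous
  { toFun := (h_e.isDenseInducing h_dense).extend f
    map_add' := by
      refine h_dense.induction_on₂ ?_ ?_
      · exact isClosed_eq (cont.comp continuous_add)
          ((cont.comp continuous_fst).add (cont.comp continuous_snd))
      · intro x y
        simp only [eq, ← e.map_add]
        exact f.map_add _ _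
    map_smul' := fun k => by
      refine fun b => h_dense.induction_on b ?_ ?_
      · exact isClosed_eq (cont.comp (continuous_const_smul _))
          ((continuous_const_smul _).comp cont)
      · intro x
        rw [← map_smul]
        simp only [eq]
        exact ContinuousLinearMap.map_smulₛₗ _ _ _
    cont := cont }

lemma extendCLM_eq {E T F : Type} [SeminormedAddCommGroup E] [NormedSpace ℂ E]
    [SeminormedAddCommGroup T] [NormedSpace ℂ T] [NormedAddCommGroup F] [NormedSpace ℂ F]
    [CompleteSpace F] (f : E →L[ℂ] F) (e : E →L[ℂ] T) (h_dense : DenseRange e)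
    (h_e : IsUniformInducing e) (x : E) :
    extendCLM f e h_dense h_e (e x) = f x :=
  IsDenseInducing.extend_eq (h_e.isDenseInducing h_dense) f.cont _

end BM

set_option maxHeartbeats 2000000 in
set_option synthInstance.maxHeartbeats 1000000 in
/-- The Banach algebra `M_I` (that is, `ℓ¹(I×I)` with the
convolution matrix product) is self-induced: the multiplication map
`M_I ⊗̂_{M_I} M_I → M_I` is an isomorphism of `M_I`-bimodules. -/
theorem brandt_morita_stmt5 (I : Type) [Nonempty I] :
    ∃ mulM : L1 (I × I) →L[ℂ] L1 (I × I) →L[ℂ] L1 (I × I),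
      (∀ (a b : L1 (I × I)) (i j : I), mulM a b (i, j) = ∑' k : I, a (i, k) * b (k, j)) ∧
      SelfInduced mulM := by
  classical
  refine ⟨BM.mulM I, fun a b i j => BM.mulM_apply a b (i, j), ?_⟩
  intro T _ _ φ hφ
  haveI : CompleteSpace T := hφ.complete
  set A := L1 (I × I) with hA
  set N : Submodule ℂ T :=
    balancer φ (fun a b => BM.mulM I a b) (fun a b => BM.mulM I a b) with hN
  have hNclosed : IsClosed (N : Set T) := Submodule.isClosed_topologicalClosure _
  haveI : IsClosed (N : Set T) := hNclosed
  -- membership of the balancing relations in `N`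
  have hgen : ∀ (x a y : A),
      φ (BM.mulM I x a) y - φ x (BM.mulM I a y) ∈ N := by
    intro x a y
    refine Submodule.le_topologicalClosure _ ?_
    exact Submodule.subset_span ⟨x, a, y, rfl⟩
  -- the induced seminorm on `A ⊗ A`
  letI : SeminormedAddCommGroup (A ⊗[ℂ] A) :=
    SeminormedAddCommGroup.induced _ _ (TensorProduct.lift φ)
  letI : NormedSpace ℂ (A ⊗[ℂ] A) := NormedSpace.induced ℂ _ _ (TensorProduct.lift φ)
  have hiso : Isometry (TensorProduct.lift φ) :=
    AddMonoidHomClass.isometry_of_norm _ (fun x => rfl)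
  let eL : (A ⊗[ℂ] A) →L[ℂ] T := ⟨TensorProduct.lift φ, hiso.continuous⟩
  have h_dense : DenseRange eL := hφ.dense
  -- the multiplication as a linear map on the tensor product
  let mLin := TensorProduct.lift (BM.mulMbil I)
  have hmulMbil : ∀ x y : A, BM.mulMbil I x y = BM.mulM I x y := fun x y => rfl
  have hmb : ∀ z : A ⊗[ℂ] A, ‖mLin z‖ ≤ ‖z‖ := by
    intro z
    have h1 : ‖mLin z‖ ≤ projNorm z :=
      BM.norm_lift_le_projNorm (BM.mulMbil I)
        (fun x y => by simpa [BM.mulMbil] using BM.norm_convL1_le x y) z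
    have h2 : ‖z‖ = projNorm z := by
      rw [← hφ.isometry z]; rfl
    rw [h2]; exact h1
  let mCont : (A ⊗[ℂ] A) →L[ℂ] A := mLin.mkContinuous 1 (fun z => by rw [one_mul]; exact hmb z)
  -- the extended multiplication `T → A`
  let Mt : T →L[ℂ] A := BM.extendCLM mCont eL h_dense hiso.isUniformInducing
  have hMt : ∀ z : A ⊗[ℂ] A, Mt (TensorProduct.lift φ z) = mLin z := fun z =>
    BM.extendCLM_eq mCont eL h_dense hiso.isUniformInducing z
  have hMtφ : ∀ a b : A, Mt (φ a b) = BM.mulM I a b := by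
    intro a b
    have h1 : φ a b = TensorProduct.lift φ (a ⊗ₜ[ℂ] b) := rfl
    rw [h1, hMt]
    rfl
  -- N is contained in the kernel of Mt
  have hker : N ≤ LinearMap.ker (Mt : T →ₗ[ℂ] A) := by
    have hclosedker : IsClosed ((LinearMap.ker (Mt : T →ₗ[ℂ] A) : Submodule ℂ T) : Set T) := by
      have h1 : ((LinearMap.ker (Mt : T →ₗ[ℂ] A) : Submodule ℂ T) : Set T)
          = Mt ⁻¹' {0} := by
        ext t; simp [LinearMap.mem_ker]
      rw [h1]
      exact isClosed_singleton.preimage Mt.continuous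
    refine Submodule.topologicalClosure_minimal _ ?_ hclosedker
    rw [Submodule.span_le]
    rintro z ⟨x, a, y, rfl⟩
    simp only [SetLike.mem_coe, LinearMap.mem_ker]
    show Mt (φ (BM.mulM I x a) y - φ x (BM.mulM I a y)) = 0
    rw [map_sub, hMtφ, hMtφ, BM.mulM_assoc]
    exact sub_self _
  -- the induced map on the quotient
  let ebarl : (T ⧸ N) →ₗ[ℂ] A := N.liftQ (Mt : T →ₗ[ℂ] A) hker
  have hebar_mk : ∀ t : T, ebarl (Submodule.Quotient.mk t) = Mt t := fun t => rfl
  have hebound : ∀ q : T ⧸ N, ‖ebarl q‖ ≤ (‖Mt‖ + 1) * ‖q‖ := by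
    intro q
    refine le_of_forall_pos_le_add fun ε hε => ?_
    have hMt1 : (0:ℝ) < ‖Mt‖ + 1 := by positivity
    obtain ⟨m, hm, hlt⟩ := Submodule.Quotient.norm_mk_lt q (div_pos hε hMt1)
    have h1 : ‖ebarl q‖ = ‖Mt m‖ := by rw [← hm, hebar_mk]
    have h2 : ‖Mt m‖ ≤ (‖Mt‖ + 1) * ‖m‖ := by
      refine (Mt.le_opNorm m).trans ?_
      have := norm_nonneg m
      nlinarith [norm_nonneg (Mt : T →L[ℂ] A)]
    have h3 : (‖Mt‖ + 1) * ‖m‖ ≤ (‖Mt‖ + 1) * (‖q‖ + ε / (‖Mt‖ + 1)) :=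
      mul_le_mul_of_nonneg_left hlt.le hMt1.le
    have h4 : (‖Mt‖ + 1) * (‖q‖ + ε / (‖Mt‖ + 1)) = (‖Mt‖ + 1) * ‖q‖ + ε := by
      field_simp
    calc ‖ebarl q‖ = ‖Mt m‖ := h1
      _ ≤ (‖Mt‖ + 1) * ‖m‖ := h2
      _ ≤ (‖Mt‖ + 1) * (‖q‖ + ε / (‖Mt‖ + 1)) := h3
      _ = (‖Mt‖ + 1) * ‖q‖ + ε := h4
  let ebar : (T ⧸ N) →L[ℂ] A := ebarl.mkContinuous (‖Mt‖ + 1) hebound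
  have hebar_apply : ∀ q : T ⧸ N, ebar q = ebarl q := fun q => rfl
  -- the map J : A → T ⧸ N
  have hφnorm : ∀ x y : A, ‖φ x y‖ ≤ ‖x‖ * ‖y‖ := by
    intro x y
    have h1 : φ x y = TensorProduct.lift φ (x ⊗ₜ[ℂ] y) := rfl
    rw [h1, hφ.isometry]
    exact BM.projNorm_tmul_le x y
  let v : I × I → T ⧸ N := fun p => Submodule.Quotient.mk (φ (delta (p.1, p.1)) (delta p))
  have hv : ∀ p, ‖v p‖ ≤ 1 := by
    intro p
    refine (Submodule.Quotient.norm_mk_le N _).trans ?_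
    refine (hφnorm _ _).trans ?_
    rw [BM.norm_delta, BM.norm_delta]
    norm_num
  have hsumJ : ∀ a : A, Summable fun p => a p • v p := by
    intro a
    refine Summable.of_norm_bounded (BM.summable_norm a) fun p => ?_
    rw [norm_smul]
    calc ‖a p‖ * ‖v p‖ ≤ ‖a p‖ * 1 := by
          gcongr
          exact hv p
      _ = ‖a p‖ := mul_one _
  have hsumJn : ∀ a : A, Summable fun p => ‖a p • v p‖ := by
    intro a
    refine Summable.of_nonneg_of_le (fun _ => norm_nonneg _) (fun p => ?_) (BM.summable_norm a)
    rw [norm_smul]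
    calc ‖a p‖ * ‖v p‖ ≤ ‖a p‖ * 1 := by
          gcongr
          exact hv p
      _ = ‖a p‖ := mul_one _
  let Jl : A →ₗ[ℂ] (T ⧸ N) :=
    { toFun := fun a => ∑' p, a p • v p
      map_add' := by
        intro a b
        rw [← Summable.tsum_add (hsumJ a) (hsumJ b)]
        exact tsum_congr fun p => by
          rw [lp.coeFn_add, Pi.add_apply, add_smul]
      map_smul' := by
        intro c a
        simp only [RingHom.id_apply]
        rw [← Summable.tsum_const_smul c (hsumJ a)]
        exact tsum_congr fun p => by
          rw [lp.coeFn_smul, Pi.smul_apply, smul_smul]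
          rfl }
  have hJbound : ∀ a : A, ‖Jl a‖ ≤ 1 * ‖a‖ := by
    intro a
    rw [one_mul, BM.norm_eq a]
    refine (norm_tsum_le_tsum_norm (hsumJn a)).trans ?_
    refine Summable.tsum_le_tsum (fun p => ?_) (hsumJn a) (BM.summable_norm a)
    rw [norm_smul]
    calc ‖a p‖ * ‖v p‖ ≤ ‖a p‖ * 1 := by
          gcongr
          exact hv p
      _ = ‖a p‖ := mul_one _
  let J : A →L[ℂ] (T ⧸ N) := Jl.mkContinuous 1 hJbound
  have hJapply : ∀ a : A, J a = ∑' p, a p • v p := fun a => rfl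
  have hJdelta : ∀ p : I × I, J (delta p) = v p := by
    intro p
    rw [hJapply]
    rw [tsum_eq_single p (fun q hq => by
      rw [BM.delta_apply]
      simp [hq])]
    rw [BM.delta_apply]
    simp
  have hebarv : ∀ p : I × I, ebar (v p) = delta p := by
    intro p
    rw [hebar_apply]
    show ebarl (Submodule.Quotient.mk _) = _
    rw [hebar_mk, hMtφ, BM.mulM_delta_delta]
    simp
  have heJ : ∀ a : A, ebar (J a) = a := by
    intro a
    rw [hJapply, ContinuousLinearMap.map_tsum ebar (hsumJ a)]
    calc (∑' p, ebar (a p • v p)) = ∑' p, a p • (delta p : A) := by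
          refine tsum_congr fun p => ?_
          rw [map_smul, hebarv]
      _ = a := (BM.hasSum_delta a).tsum_eq
  -- the core identity on matrix units
  have hcore : ∀ p q : I × I,
      J (BM.mulM I (delta p) (delta q))
        = Submodule.Quotient.mk (φ (delta p) (delta q)) := by
    intro p q
    by_cases hpq : p.2 = q.1
    · rw [BM.mulM_delta_delta, if_pos hpq, hJdelta]
      refine ((Submodule.Quotient.eq N).2 ?_)
      have h := hgen (delta (p.1, p.1)) (delta p) (delta q)
      have e1 : BM.mulM I (delta (p.1, p.1)) (delta p) = delta p := by
        rw [BM.mulM_delta_delta]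
        simp
      have e2 : BM.mulM I (delta p) (delta q) = delta (p.1, q.2) := by
        rw [BM.mulM_delta_delta, if_pos hpq]
      rw [e1, e2] at h
      have := N.neg_mem h
      simpa [neg_sub] using this
    · rw [BM.mulM_delta_delta, if_neg hpq, map_zero]
      symm
      rw [Submodule.Quotient.mk_eq_zero]
      have h := hgen (delta p) (delta (p.2, p.2)) (delta q)
      have e1 : BM.mulM I (delta p) (delta (p.2, p.2)) = delta p := by
        rw [BM.mulM_delta_delta]
        simp
      have e2 : BM.mulM I (delta (p.2, p.2)) (delta q) = 0 := by
        rw [BM.mulM_delta_delta]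
        simp [hpq]
      rw [e1, e2] at h
      simpa using h
  -- density of the span of the deltas
  have hdenseA : Dense ((Submodule.span ℂ (Set.range (delta : I × I → A)) : Submodule ℂ A)
      : Set A) := by
    intro a
    refine mem_closure_of_tendsto (BM.hasSum_delta a) ?_
    refine Filter.Eventually.of_forall fun s => ?_
    exact Submodule.sum_mem _ fun p _ =>
      Submodule.smul_mem _ _ (Submodule.subset_span ⟨p, rfl⟩)
  -- reduce to deltas, first in the second variable with the first one a delta
  have hstep1 : ∀ (p : I × I) (y : A),
      J (BM.mulM I (delta p) y) = Submodule.Quotient.mk (φ (delta p) y) := by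
    intro p
    let F1 : A →L[ℂ] T ⧸ N := J.comp (BM.mulM I (delta p))
    let G : A →ₗ[ℂ] T ⧸ N := N.mkQ.comp (φ (delta p))
    have hGb : ∀ y : A, ‖G y‖ ≤ 1 * ‖y‖ := by
      intro y
      refine (Submodule.Quotient.norm_mk_le N _).trans ?_
      refine (hφnorm _ _).trans ?_
      rw [BM.norm_delta, one_mul]
    let F2 : A →L[ℂ] T ⧸ N := G.mkContinuous 1 hGb
    have hF : F1 = F2 := by
      refine ContinuousLinearMap.ext_on hdenseA ?_
      rintro _ ⟨q, rfl⟩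
      show J (BM.mulM I (delta p) (delta q)) = Submodule.Quotient.mk (φ (delta p) (delta q))
      exact hcore p q
    intro y
    exact DFunLike.congr_fun hF y
  -- then in the first variable
  have hstep2 : ∀ (x y : A),
      J (BM.mulM I x y) = Submodule.Quotient.mk (φ x y) := by
    intro x y
    let F1 : A →L[ℂ] T ⧸ N := J.comp ((BM.mulM I).flip y)
    let G : A →ₗ[ℂ] T ⧸ N := N.mkQ.comp (φ.flip y)
    have hGb : ∀ x : A, ‖G x‖ ≤ ‖y‖ * ‖x‖ := by
      intro x
      refine (Submodule.Quotient.norm_mk_le N _).trans ?_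
      refine (hφnorm _ _).trans ?_
      rw [mul_comm]
    let F2 : A →L[ℂ] T ⧸ N := G.mkContinuous ‖y‖ hGb
    have hF : F1 = F2 := by
      refine ContinuousLinearMap.ext_on hdenseA ?_
      rintro _ ⟨q, rfl⟩
      show J (BM.mulM I (delta q) y) = Submodule.Quotient.mk (φ (delta q) y)
      exact hstep1 q y
    exact DFunLike.congr_fun hF x
  -- J ∘ ebar = id
  have hfun : ∀ t : T, J (Mt t) = Submodule.Quotient.mk t := by
    have hmkQcont : Continuous fun t : T => (Submodule.Quotient.mk t : T ⧸ N) := by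
      have : ∀ t : T, ‖(Submodule.Quotient.mk t : T ⧸ N)‖ ≤ 1 * ‖t‖ := fun t => by
        simpa using Submodule.Quotient.norm_mk_le N t
      exact (N.mkQ.mkContinuous 1 this).continuous
    have heqOn : Set.EqOn (fun t : T => J (Mt t))
        (fun t : T => (Submodule.Quotient.mk t : T ⧸ N))
        (Set.range (TensorProduct.lift φ)) := by
      rintro _ ⟨z, rfl⟩
      show J (Mt (TensorProduct.lift φ z)) = Submodule.Quotient.mk (TensorProduct.lift φ z)
      induction z using TensorProduct.induction_on with
      | zero => simp [map_zero]
      | tmul x y =>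
          rw [hMt]
          have h1 : mLin (x ⊗ₜ[ℂ] y) = BM.mulM I x y := rfl
          have h2 : TensorProduct.lift φ (x ⊗ₜ[ℂ] y) = φ x y := rfl
          rw [h1, h2]
          exact hstep2 x y
      | add u w hu hw =>
          simp only [map_add, Submodule.Quotient.mk_add, hu, hw]
    have hcont1 : Continuous fun t : T => J (Mt t) := J.continuous.comp Mt.continuous
    have hclos := heqOn.closure hcont1 hmkQcont
    intro t
    have ht : t ∈ closure (Set.range (TensorProduct.lift φ)) := hφ.dense t
    exact hclos ht
  have hJe : ∀ q : T ⧸ N, J (ebar q) = q := by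
    intro q
    obtain ⟨m, rfl⟩ := Submodule.Quotient.mk_surjective N q
    rw [hebar_apply, hebar_mk]
    exact hfun m
  -- assemble the equivalence
  refine ⟨ContinuousLinearEquiv.equivOfInverse ebar J hJe heJ, ?_, ?_, ?_⟩
  · intro a b
    show ebar (Submodule.Quotient.mk (φ a b)) = BM.mulM I a b
    rw [hebar_apply, hebar_mk]
    exact hMtφ a b
  · intro c a b
    show ebar (Submodule.Quotient.mk (φ (BM.mulM I c a) b))
        = BM.mulM I c (ebar (Submodule.Quotient.mk (φ a b)))
    rw [hebar_apply, hebar_mk, hMtφ, hebar_apply, hebar_mk, hMtφ]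
    exact BM.mulM_assoc c a b
  · intro a b c
    show ebar (Submodule.Quotient.mk (φ a (BM.mulM I b c)))
        = BM.mulM I (ebar (Submodule.Quotient.mk (φ a b))) c
    rw [hebar_apply, hebar_mk, hMtφ, hebar_apply, hebar_mk, hMtφ]
    exact (BM.mulM_assoc a b c).symm
end
end

section
/- Let G be a discrete group, I a nonempty set, S = B(I,G) the Brandt semigroup, and T = I×G×I. Define u : ℓ¹(T) → ℓ¹(S) by u(b)(t) = b(t) for t ∈ T and u(b)(∘) = −Σ_{s∈T} b(s); define v : ℓ¹(S) → ℂ by v(a) = Σ_{s∈S} a(s); define w : ℓ¹(S) → ℓ¹(T) by w(a) = a|_T. Then u, v, w are continuous algebra homomorphisms, the sequence 0 → ℓ¹(T) →^u ℓ¹(S) →^v ℂ → 0 is exact, and w ∘ u = id_{ℓ¹(T)}. -/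
open scoped TensorProduct BigOperators ENNReal
open Filter

noncomputable section

/-- The Brandt semigroup `B(I,G) = (I × G × I) ∪ {∘}`, with `∘ = none`. -/
abbrev Brandt (I G : Type) : Type := Option (I × G × I)

open Classical in
/-- Multiplication of the Brandt semigroup: `(i,g,j)(i',g',j') = (i,gg',j')` if
`j = i'` and `∘` otherwise; `∘` is absorbing. -/
noncomputable instance {I G : Type} [Mul G] : Mul (Brandt I G) :=
  ⟨fun a b => match a, b with
    | some (i, g, j), some (i', g', j') => if j = i' then some (i, g * g', j') else none
    | _, _ => none⟩

open Classical in
/-- The convolution product on `ℓ¹(S)` for a (semi)group `S`: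
`(a * b)(s) = ∑_{uv = s} a(u) b(v)`. -/
noncomputable def l1conv {S : Type} [Mul S] (a b : L1 S) (s : S) : ℂ :=
  ∑' p : S × S, if p.1 * p.2 = s then a p.1 * b p.2 else 0

namespace BrandtAux

open Classical

lemma l1_summable_norm {X : Type} (a : L1 X) : Summable fun x => ‖a x‖ := by
  simpa using (lp.memℓp a).summable (by norm_num : (0:ℝ) < (1:ℝ≥0∞).toReal)

lemma l1_summable {X : Type} (a : L1 X) : Summable fun x => a x :=
  (l1_summable_norm a).of_norm

lemma l1_norm_eq {X : Type} (a : L1 X) : ‖a‖ = ∑' x, ‖a x‖ := by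
  simpa using lp.norm_eq_tsum_rpow (by norm_num : (0:ℝ) < (1:ℝ≥0∞).toReal) a

lemma l1_memℓp {X : Type} {f : X → ℂ} (hf : Summable fun x => ‖f x‖) :
    Memℓp f (1 : ℝ≥0∞) := memℓp_gen (by simpa using hf)

section Conv

variable {S : Type} [Mul S]

lemma hF (a b : L1 S) : Summable fun p : S × S => ‖a p.1 * b p.2‖ := by
  simpa [norm_mul] using
    (l1_summable_norm a).mul_of_nonneg (l1_summable_norm b)
      (fun _ => norm_nonneg _) (fun _ => norm_nonneg _)

lemma hFval (a b : L1 S) : Summable fun p : S × S => a p.1 * b p.2 := (hF a b).of_norm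

lemma tsum_hF (a b : L1 S) : ∑' p : S × S, ‖a p.1 * b p.2‖ = ‖a‖ * ‖b‖ := by
  rw [l1_norm_eq a, l1_norm_eq b]
  rw [Summable.tsum_mul_tsum (l1_summable_norm a) (l1_summable_norm b)
    (by simpa [norm_mul] using hF a b)]
  simp [norm_mul]

lemma summand_summable (a b : L1 S) (s : S) :
    Summable fun p : S × S => if p.1 * p.2 = s then a p.1 * b p.2 else 0 := by
  apply Summable.of_norm_bounded (hF a b)
  intro p
  by_cases h : p.1 * p.2 = s <;> simp [h] <;> positivity

lemma l1conv_eq_fiber (a b : L1 S) (s : S) :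
    l1conv a b s = ∑' p : ((fun p : S × S => p.1 * p.2) ⁻¹' {s}),
      a (p : S × S).1 * b (p : S × S).2 := by
  rw [l1conv]
  rw [show (fun p : S × S => if p.1 * p.2 = s then a p.1 * b p.2 else 0)
      = Set.indicator ((fun p : S × S => p.1 * p.2) ⁻¹' {s}) (fun p => a p.1 * b p.2) from
      funext fun p => by by_cases h : p.1 * p.2 = s <;> simp [Set.indicator_apply, h]]
  exact (tsum_subtype _ _).symm

lemma norm_fiber_hasSum (a b : L1 S) :
    HasSum (fun s : S => ∑' p : ((fun p : S × S => p.1 * p.2) ⁻¹' {s}),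
      ‖a (p : S × S).1 * b (p : S × S).2‖) (‖a‖ * ‖b‖) := by
  have := ((hF a b).hasSum).tsum_fiberwise (fun p : S × S => p.1 * p.2)
  rwa [tsum_hF] at this

lemma norm_l1conv_le_fiber (a b : L1 S) (s : S) :
    ‖l1conv a b s‖ ≤ ∑' p : ((fun p : S × S => p.1 * p.2) ⁻¹' {s}),
      ‖a (p : S × S).1 * b (p : S × S).2‖ := by
  rw [l1conv_eq_fiber]
  exact norm_tsum_le_tsum_norm ((hF a b).subtype _)

lemma l1conv_summable_norm (a b : L1 S) : Summable fun s => ‖l1conv a b s‖ :=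
  Summable.of_nonneg_of_le (fun _ => norm_nonneg _) (norm_l1conv_le_fiber a b)
    (norm_fiber_hasSum a b).summable

lemma memℓp_l1conv (a b : L1 S) : Memℓp (l1conv a b) (1 : ℝ≥0∞) :=
  l1_memℓp (l1conv_summable_norm a b)

/-- The convolution as an element of `ℓ¹(S)`. -/
def conv (a b : L1 S) : L1 S := ⟨l1conv a b, memℓp_l1conv a b⟩

lemma conv_apply (a b : L1 S) (s : S) : conv a b s = l1conv a b s := rfl

lemma norm_conv_le (a b : L1 S) : ‖conv a b‖ ≤ ‖a‖ * ‖b‖ := by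
  rw [l1_norm_eq]
  calc ∑' s, ‖conv a b s‖ ≤ ∑' s, ∑' p : ((fun p : S × S => p.1 * p.2) ⁻¹' {s}),
        ‖a (p : S × S).1 * b (p : S × S).2‖ :=
        Summable.tsum_le_tsum (fun s => norm_l1conv_le_fiber a b s)
          (l1conv_summable_norm a b) (norm_fiber_hasSum a b).summable
    _ = ‖a‖ * ‖b‖ := (norm_fiber_hasSum a b).tsum_eq

lemma tsum_l1conv (a b : L1 S) :
    ∑' s, l1conv a b s = (∑' s, a s) * (∑' s, b s) := by
  have h := ((hFval a b).hasSum).tsum_fiberwise (fun p : S × S => p.1 * p.2)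
  have h2 : ∑' p : S × S, a p.1 * b p.2 = (∑' s, a s) * (∑' s, b s) :=
    (tsum_mul_tsum_of_summable_norm (l1_summable_norm a) (l1_summable_norm b)).symm
  calc ∑' s, l1conv a b s
      = ∑' s, ∑' p : ((fun p : S × S => p.1 * p.2) ⁻¹' {s}),
          a (p : S × S).1 * b (p : S × S).2 := by
        simp_rw [l1conv_eq_fiber]
    _ = ∑' p : S × S, a p.1 * b p.2 := h.tsum_eq
    _ = _ := h2

lemma l1conv_add_left (a a' b : L1 S) (s : S) :
    l1conv (a + a') b s = l1conv a b s + l1conv a' b s := by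
  rw [l1conv, l1conv, l1conv, ← Summable.tsum_add (summand_summable a b s) (summand_summable a' b s)]
  congr 1
  ext p
  have : (a + a' : L1 S) p.1 = a p.1 + a' p.1 := by
    simp
  rw [this]
  by_cases h : p.1 * p.2 = s <;> simp [h] <;> ring

lemma l1conv_add_right (a b b' : L1 S) (s : S) :
    l1conv a (b + b') s = l1conv a b s + l1conv a b' s := by
  rw [l1conv, l1conv, l1conv, ← Summable.tsum_add (summand_summable a b s) (summand_summable a b' s)]
  congr 1
  ext p
  have : (b + b' : L1 S) p.2 = b p.2 + b' p.2 := by simp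
  rw [this]
  by_cases h : p.1 * p.2 = s <;> simp [h] <;> ring

lemma l1conv_smul_left (c : ℂ) (a b : L1 S) (s : S) :
    l1conv (c • a) b s = c * l1conv a b s := by
  rw [l1conv, l1conv, ← tsum_mul_left]
  congr 1
  ext p
  have : (c • a : L1 S) p.1 = c * a p.1 := by simp
  rw [this]
  by_cases h : p.1 * p.2 = s <;> simp [h] <;> ring

lemma l1conv_smul_right (c : ℂ) (a b : L1 S) (s : S) :
    l1conv a (c • b) s = c * l1conv a b s := by
  rw [l1conv, l1conv, ← tsum_mul_left]
  congr 1
  ext p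
  have : (c • b : L1 S) p.2 = c * b p.2 := by simp
  rw [this]
  by_cases h : p.1 * p.2 = s <;> simp [h] <;> ring

/-- Convolution as a continuous bilinear map. -/
def convL : L1 S →L[ℂ] L1 S →L[ℂ] L1 S :=
  LinearMap.mkContinuous₂
    (LinearMap.mk₂ ℂ conv
      (fun a a' b => lp.ext (funext fun s => by
        simp only [lp.coeFn_add, Pi.add_apply, conv_apply]
        exact l1conv_add_left a a' b s))
      (fun c a b => lp.ext (funext fun s => by
        simp only [lp.coeFn_smul, Pi.smul_apply, conv_apply, smul_eq_mul]
        exact l1conv_smul_left c a b s))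
      (fun a b b' => lp.ext (funext fun s => by
        simp only [lp.coeFn_add, Pi.add_apply, conv_apply]
        exact l1conv_add_right a b b' s))
      (fun c a b => lp.ext (funext fun s => by
        simp only [lp.coeFn_smul, Pi.smul_apply, conv_apply, smul_eq_mul]
        exact l1conv_smul_right c a b s)))
    1 (fun a b => by simpa using norm_conv_le a b)

lemma convL_apply (a b : L1 S) (s : S) : convL a b s = l1conv a b s := rfl

end Conv

end BrandtAux

namespace BrandtAux

open Classical

section OptionStuff

variable {X : Type}

lemma tsum_option {f : Option X → ℂ} (hf : Summable f) :
    ∑' s, f s = f none + ∑' t, f (some t) := by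
  rw [Summable.tsum_eq_add_tsum_ite hf none]
  congr 1
  have hsupp : Function.support (fun x : Option X => if x = none then 0 else f x)
      ⊆ Set.range (some : X → Option X) := by
    intro x hx
    cases x with
    | none => simp [Function.mem_support] at hx
    | some t => exact ⟨t, rfl⟩
  have h := (Option.some_injective X).tsum_eq
    (f := fun x : Option X => if x = none then 0 else f x) hsupp
  rw [← h]
  exact tsum_congr fun t => by simp

/-- Summation as a continuous linear functional on `ℓ¹(X)`. -/
def sumCLM (X : Type) : L1 X →L[ℂ] ℂ :=
  LinearMap.mkContinuous
    { toFun := fun a => ∑' x, a x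
      map_add' := fun a b => by
        simp only [lp.coeFn_add, Pi.add_apply]
        exact Summable.tsum_add (l1_summable a) (l1_summable b)
      map_smul' := fun c a => by
        simp only [lp.coeFn_smul, Pi.smul_apply, smul_eq_mul, RingHom.id_apply]
        exact tsum_mul_left }
    1 (fun a => by
      simp only [LinearMap.coe_mk, AddHom.coe_mk, one_mul]
      rw [l1_norm_eq]
      exact norm_tsum_le_tsum_norm (l1_summable_norm a))

lemma sumCLM_apply (a : L1 X) : sumCLM X a = ∑' x, a x := rfl

/-- Restriction `ℓ¹(Option X) → ℓ¹(X)`. -/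
def rest (a : L1 (Option X)) : L1 X :=
  ⟨fun t => a (some t),
    l1_memℓp ((l1_summable_norm a).comp_injective (Option.some_injective X))⟩

lemma rest_apply (a : L1 (Option X)) (t : X) : rest a t = a (some t) := rfl

lemma norm_rest_le (a : L1 (Option X)) : ‖rest a‖ ≤ ‖a‖ := by
  rw [l1_norm_eq, l1_norm_eq]
  exact Summable.tsum_le_tsum_of_inj (some : X → Option X) (Option.some_injective X)
    (fun c _ => norm_nonneg _) (fun t => le_rfl)
    ((l1_summable_norm a).comp_injective (Option.some_injective X))
    (l1_summable_norm a)

/-- Restriction as a continuous linear map. -/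
def restCLM (X : Type) : L1 (Option X) →L[ℂ] L1 X :=
  LinearMap.mkContinuous
    { toFun := rest
      map_add' := fun a b => lp.ext (funext fun t => by
        simp only [lp.coeFn_add, Pi.add_apply, rest_apply])
      map_smul' := fun c a => lp.ext (funext fun t => by
        simp only [lp.coeFn_smul, Pi.smul_apply, rest_apply, RingHom.id_apply]) }
    1 (fun a => by simpa using norm_rest_le a)

lemma restCLM_apply (a : L1 (Option X)) (t : X) : restCLM X a t = a (some t) := rfl

/-- Extension by zero `ℓ¹(X) → ℓ¹(Option X)`. -/
def ext0 (b : L1 X) : L1 (Option X) :=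
  ⟨fun s => s.elim 0 b, l1_memℓp <| by
    have hsupp : Function.support (fun s : Option X => ‖s.elim 0 (⇑b)‖)
        ⊆ Set.range (some : X → Option X) := by
      intro s hs
      cases s with
      | none => simp [Function.mem_support] at hs
      | some t => exact ⟨t, rfl⟩
    rw [← (Option.some_injective X).summable_iff
      (fun s hs => by_contra fun hns => hs (hsupp (Function.mem_support.mpr hns)))]
    exact (l1_summable_norm b).congr fun t => rfl⟩

end OptionStuff

end BrandtAux

namespace BrandtAux

open Classical

section OptionStuff2

variable {X : Type}

lemma ext0_apply_some (b : L1 X) (t : X) : ext0 b (some t) = b t := rfl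

lemma ext0_apply_none (b : L1 X) : ext0 b (none : Option X) = 0 := rfl

lemma tsum_ext0_norm (b : L1 X) : ∑' s : Option X, ‖ext0 b s‖ = ∑' t, ‖b t‖ := by
  have hsupp : Function.support (fun s : Option X => ‖ext0 b s‖)
      ⊆ Set.range (some : X → Option X) := by
    intro s hs
    cases s with
    | none => simp [Function.mem_support, ext0_apply_none] at hs
    | some t => exact ⟨t, rfl⟩
  rw [← (Option.some_injective X).tsum_eq hsupp]
  exact tsum_congr fun t => rfl

lemma norm_ext0 (b : L1 X) : ‖ext0 b‖ = ‖b‖ := by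
  rw [l1_norm_eq, l1_norm_eq, tsum_ext0_norm]

/-- Extension by zero as a continuous linear map. -/
def ext0CLM (X : Type) : L1 X →L[ℂ] L1 (Option X) :=
  LinearMap.mkContinuous
    { toFun := ext0
      map_add' := fun a b => lp.ext (funext fun s => by
        cases s with
        | none => simp [lp.coeFn_add, Pi.add_apply, ext0_apply_none]
        | some t => simp [lp.coeFn_add, Pi.add_apply, ext0_apply_some])
      map_smul' := fun c a => lp.ext (funext fun s => by
        cases s with
        | none => simp [lp.coeFn_smul, Pi.smul_apply, ext0_apply_none]
        | some t => simp [lp.coeFn_smul, Pi.smul_apply, ext0_apply_some]) }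
    1 (fun a => by simp [norm_ext0])

/-- The map `u : ℓ¹(X) → ℓ¹(Option X)`. -/
def uCLM (X : Type) : L1 X →L[ℂ] L1 (Option X) :=
  ext0CLM X - (sumCLM X).smulRight (delta (none : Option X))

lemma uCLM_apply_some (b : L1 X) (t : X) : uCLM X b (some t) = b t := by
  have : uCLM X b = ext0 b - (∑' x, b x) • delta (none : Option X) := rfl
  rw [this]
  have h0 : delta (none : Option X) (some t) = 0 := by
    rw [delta]
    exact @lp.single_apply_ne (Option X) (fun _ => ℂ) _
      (fun a b => Classical.propDecidable _) 1 none 1 (some t)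
      (show some t ≠ none by simp)
  simp [lp.coeFn_sub, Pi.sub_apply, lp.coeFn_smul, Pi.smul_apply,
    ext0_apply_some, h0]
  change (ext0 b) (some t) - (∑' x, b x) • (delta (none : Option X)) (some t) = b t
  rw [ext0_apply_some, h0]
  simp

lemma uCLM_apply_none (b : L1 X) : uCLM X b (none : Option X) = -∑' t, b t := by
  have : uCLM X b = ext0 b - (∑' x, b x) • delta (none : Option X) := rfl
  rw [this]
  have h1 : delta (none : Option X) (none : Option X) = 1 := by
    rw [delta]
    exact @lp.single_apply_self (Option X) (fun _ => ℂ) _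
      (fun a b => Classical.propDecidable _) 1 none 1
  simp [lp.coeFn_sub, Pi.sub_apply, lp.coeFn_smul, Pi.smul_apply,
    ext0_apply_none, h1]
  change (ext0 b) none - (∑' x, b x) • (delta (none : Option X)) none = -∑' t, b t
  rw [ext0_apply_none, h1]
  simp

lemma tsum_uCLM (b : L1 X) : ∑' s, uCLM X b s = 0 := by
  rw [tsum_option (l1_summable (uCLM X b)), uCLM_apply_none]
  have : ∑' t, uCLM X b (some t) = ∑' t, b t :=
    tsum_congr fun t => uCLM_apply_some b t
  rw [this]
  ring

lemma rest_uCLM (b : L1 X) : restCLM X (uCLM X b) = b :=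
  lp.ext (funext fun t => by rw [restCLM_apply, uCLM_apply_some])

end OptionStuff2

end BrandtAux

namespace BrandtAux

open Classical

section BrandtSpec

variable {I G : Type} [Group G]

lemma none_mul (q : Brandt I G) : (none : Brandt I G) * q = none := by
  rcases q with _ | ⟨i, g, j⟩ <;> rfl

lemma mul_none (p : Brandt I G) : p * none = none := by
  rcases p with _ | ⟨i, g, j⟩ <;> rfl

lemma some_mul_some (i : I) (g : G) (j i' : I) (g' : G) (j' : I) :
    (some (i, g, j) : Brandt I G) * some (i', g', j') =
      if j = i' then some (i, g * g', j') else none := rfl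

lemma mul_eq_some {p q : Brandt I G} {t : I × G × I} (h : p * q = some t) :
    ∃ t1 t2 : I × G × I, p = some t1 ∧ q = some t2 := by
  cases p with
  | none => rw [none_mul] at h; exact absurd h (by simp)
  | some t1 =>
    cases q with
    | none => rw [mul_none] at h; exact absurd h (by simp)
    | some t2 => exact ⟨t1, t2, rfl, rfl⟩

lemma l1conv_some_congr {x y x' y' : L1 (Brandt I G)}
    (hx : ∀ t, x' (some t) = x (some t)) (hy : ∀ t, y' (some t) = y (some t))
    (t : I × G × I) :
    l1conv x' y' (some t) = l1conv x y (some t) := by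
  rw [l1conv, l1conv]
  refine tsum_congr fun p => ?_
  by_cases h : p.1 * p.2 = some t
  · obtain ⟨t1, t2, h1, h2⟩ := mul_eq_some h
    rw [if_pos h, if_pos h, h1, h2, hx, hy]
  · rw [if_neg h, if_neg h]

lemma l1conv_none (x y : L1 (Brandt I G)) :
    l1conv x y (none : Brandt I G)
      = (∑' s, x s) * (∑' s, y s) - ∑' t : I × G × I, l1conv x y (some t) := by
  have hsum : Summable fun s : Brandt I G => l1conv x y s :=
    (l1conv_summable_norm x y).of_norm
  have h' : (∑' s, x s) * (∑' s, y s)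
      = l1conv x y none + ∑' t : I × G × I, l1conv x y (some t) := by
    rw [← tsum_l1conv x y]
    exact tsum_option hsum
  rw [h']
  ring

variable (I G)

/-- The multiplication on `ℓ¹(T)`, obtained by transport from `ℓ¹(S)`. -/
def mulTCLM : L1 (I × G × I) →L[ℂ] L1 (I × G × I) →L[ℂ] L1 (I × G × I) :=
  ((ContinuousLinearMap.compL ℂ (L1 (I × G × I)) (L1 (Brandt I G))
      (L1 (I × G × I))).flip (uCLM (I × G × I))).comp
    (((ContinuousLinearMap.compL ℂ (L1 (Brandt I G)) (L1 (Brandt I G))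
        (L1 (I × G × I))) (restCLM (I × G × I))).comp
      ((convL (S := Brandt I G)).comp (uCLM (I × G × I))))

variable {I G}

lemma mulTCLM_eq (a b : L1 (I × G × I)) :
    mulTCLM I G a b
      = restCLM (I × G × I) (convL (uCLM (I × G × I) a) (uCLM (I × G × I) b)) := rfl

lemma mulTCLM_apply (a b : L1 (I × G × I)) (t : I × G × I) :
    mulTCLM I G a b t = l1conv (uCLM (I × G × I) a) (uCLM (I × G × I) b) (some t) := rfl

lemma mulT_formula (a b : L1 (I × G × I)) (i : I) (g : G) (j : I) :
    mulTCLM I G a b (i, g, j)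
      = ∑' p : I × G, a (i, g * p.2⁻¹, p.1) * b (p.1, p.2, j) := by
  rw [mulTCLM_apply, l1conv]
  have hinj : Function.Injective (fun q : I × G =>
      ((some (i, g * q.2⁻¹, q.1), some (q.1, q.2, j)) : Brandt I G × Brandt I G)) := by
    intro q q' hq
    dsimp only at hq
    have e2 := congrArg Prod.snd hq
    dsimp only at e2
    rw [Option.some.injEq, Prod.mk.injEq, Prod.mk.injEq] at e2
    exact Prod.ext_iff.mpr ⟨e2.1, e2.2.1⟩
  have hsupp : Function.support (fun p : Brandt I G × Brandt I G =>
      @ite ℂ (p.1 * p.2 = some (i, g, j)) (Classical.propDecidable _)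
        (uCLM (I × G × I) a p.1 * uCLM (I × G × I) b p.2) 0)
      ⊆ Set.range (fun q : I × G =>
        ((some (i, g * q.2⁻¹, q.1), some (q.1, q.2, j)) : Brandt I G × Brandt I G)) := by
    intro p hp
    have hcond : p.1 * p.2 = some (i, g, j) := by
      by_contra hc
      exact hp (if_neg hc)
    obtain ⟨t1, t2, h1, h2⟩ := mul_eq_some hcond
    rcases t1 with ⟨i1, g1, j1⟩
    rcases t2 with ⟨i2, g2, j2⟩
    rw [h1, h2, some_mul_some] at hcond
    by_cases he : j1 = i2
    · rw [if_pos he] at hcond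
      obtain ⟨h3, h4, h5⟩ : i1 = i ∧ g1 * g2 = g ∧ j2 = j := by
        simpa [Prod.ext_iff] using hcond
      have hg1 : g * g2⁻¹ = g1 := by rw [← h4]; group
      refine ⟨(i2, g2), ?_⟩
      have hpp : p = (some (i1, g1, j1), some (i2, g2, j2)) :=
        Prod.ext_iff.mpr ⟨h1, h2⟩
      show ((some (i, g * g2⁻¹, i2), some (i2, g2, j)) : Brandt I G × Brandt I G) = p
      rw [hpp, h3, ← hg1, he, h5]
    · rw [if_neg he] at hcond
      exact absurd hcond (by simp)
  rw [← hinj.tsum_eq hsupp]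
  refine tsum_congr fun q => ?_
  rcases q with ⟨k, h⟩
  have hcond : (some (i, g * h⁻¹, k) : Brandt I G) * some (k, h, j) = some (i, g, j) := by
    rw [some_mul_some, if_pos rfl, inv_mul_cancel_right]
  show @ite ℂ ((some (i, g * h⁻¹, k) : Brandt I G) * some (k, h, j) = some (i, g, j))
      (Classical.propDecidable _)
      (uCLM (I × G × I) a (some (i, g * h⁻¹, k)) * uCLM (I × G × I) b (some (k, h, j))) 0
      = a (i, g * h⁻¹, k) * b (k, h, j)
  rw [if_pos hcond, uCLM_apply_some, uCLM_apply_some]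

end BrandtSpec

end BrandtAux

open BrandtAux

/-- For the Brandt semigroup `S = B(I,G)` and `T = I×G×I`, the maps
`u : ℓ¹(T) → ℓ¹(S)` (`u(b)|_T = b`, `u(b)(∘) = -∑_{s∈T} b(s)`), `v : ℓ¹(S) → ℂ`
(`v(a) = ∑_s a(s)`) and `w : ℓ¹(S) → ℓ¹(T)` (`w(a) = a|_T`) are continuous algebra
homomorphisms, `0 → ℓ¹(T) → ℓ¹(S) → ℂ → 0` is exact, and `w ∘ u = id`. -/
theorem brandt_morita_stmt7 (I G : Type) [Nonempty I] [Group G] :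
    ∃ (mulT : L1 (I × G × I) →L[ℂ] L1 (I × G × I) →L[ℂ] L1 (I × G × I))
      (mulS : L1 (Brandt I G) →L[ℂ] L1 (Brandt I G) →L[ℂ] L1 (Brandt I G)),
      -- `ℓ¹(T)` with `(ab)(i,g,j) = ∑_{k ∈ I, h ∈ G} a(i,gh⁻¹,k) b(k,h,j)`
      (∀ (a b : L1 (I × G × I)) (i : I) (g : G) (j : I),
        mulT a b (i, g, j) = ∑' p : I × G, a (i, g * p.2⁻¹, p.1) * b (p.1, p.2, j)) ∧
      -- `ℓ¹(S)` with the semigroup convolution product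
      (∀ (a b : L1 (Brandt I G)) (s : Brandt I G), mulS a b s = l1conv a b s) ∧
      ∃ (u : L1 (I × G × I) →L[ℂ] L1 (Brandt I G))
        (v : L1 (Brandt I G) →L[ℂ] ℂ)
        (w : L1 (Brandt I G) →L[ℂ] L1 (I × G × I)),
        (∀ (b : L1 (I × G × I)) (t : I × G × I), u b (some t) = b t) ∧
        (∀ b : L1 (I × G × I), u b (none : Brandt I G) = -∑' t : I × G × I, b t) ∧
        (∀ a : L1 (Brandt I G), v a = ∑' s : Brandt I G, a s) ∧
        (∀ (a : L1 (Brandt I G)) (t : I × G × I), w a t = a (some t)) ∧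
        -- `u`, `v`, `w` are (continuous) algebra homomorphisms
        (∀ a b : L1 (I × G × I), u (mulT a b) = mulS (u a) (u b)) ∧
        (∀ a b : L1 (Brandt I G), v (mulS a b) = v a * v b) ∧
        (∀ a b : L1 (Brandt I G), w (mulS a b) = mulT (w a) (w b)) ∧
        -- exactness of `0 → ℓ¹(T) → ℓ¹(S) → ℂ → 0`
        Function.Injective ⇑u ∧
        LinearMap.range (u : L1 (I × G × I) →ₗ[ℂ] L1 (Brandt I G)) = LinearMap.ker (v : L1 (Brandt I G) →ₗ[ℂ] ℂ) ∧
        Function.Surjective ⇑v ∧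
        -- `w ∘ u = id`
        (∀ b : L1 (I × G × I), w (u b) = b) := by
    classical
  refine ⟨mulTCLM I G, convL (S := Brandt I G),
    fun a b i g j => mulT_formula a b i g j,
    fun a b s => rfl,
    uCLM (I × G × I), sumCLM (Brandt I G), restCLM (I × G × I),
    fun b t => uCLM_apply_some b t,
    fun b => uCLM_apply_none b,
    fun a => rfl,
    fun a t => rfl,
    ?_, ?_, ?_, ?_, ?_, ?_,
    fun b => rest_uCLM b⟩
  · -- u homomorphism
    intro a b
    refine lp.ext (funext fun s => ?_)
    cases s with
    | some t =>
      rw [uCLM_apply_some]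
      rfl
    | none =>
      rw [uCLM_apply_none]
      have h2 : (convL (uCLM (I × G × I) a) (uCLM (I × G × I) b)) (none : Brandt I G)
          = (∑' s, uCLM (I × G × I) a s) * (∑' s, uCLM (I × G × I) b s)
            - ∑' t : I × G × I,
                l1conv (uCLM (I × G × I) a) (uCLM (I × G × I) b) (some t) :=
        l1conv_none _ _
      rw [h2, tsum_uCLM, tsum_uCLM, zero_mul, zero_sub, neg_inj]
      exact tsum_congr fun t => rfl
  · -- v homomorphism
    intro a b
    exact tsum_l1conv a b
  · -- w homomorphism
    intro a b
    refine lp.ext (funext fun t => ?_)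
    exact (l1conv_some_congr (fun t' => uCLM_apply_some (restCLM _ a) t')
      (fun t' => uCLM_apply_some (restCLM _ b) t') t).symm
  · -- injectivity of u
    intro b b' h
    have h2 := congrArg (restCLM (I × G × I)) h
    rwa [rest_uCLM, rest_uCLM] at h2
  · -- range u = ker v
    ext a
    simp only [LinearMap.mem_range, LinearMap.mem_ker]
    constructor
    · rintro ⟨b, rfl⟩
      exact tsum_uCLM b
    · intro ha
      refine ⟨restCLM (I × G × I) a, ?_⟩
      refine lp.ext (funext fun s => ?_)
      cases s with
      | some t =>
        show uCLM (I × G × I) (restCLM (I × G × I) a) (some t) = a (some t)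
        rw [uCLM_apply_some]
        rfl
      | none =>
        show uCLM (I × G × I) (restCLM (I × G × I) a) none = a none
        rw [uCLM_apply_none]
        have hsum : ∑' t : I × G × I, restCLM (I × G × I) a t
            = ∑' t : I × G × I, a (some t) := tsum_congr fun t => rfl
        rw [hsum]
        have h0 : a (none : Brandt I G) + ∑' t : I × G × I, a (some t) = 0 := by
          rw [← tsum_option (l1_summable a)]
          exact ha
        exact (eq_neg_of_add_eq_zero_left h0).symm
  · -- surjectivity of v
    intro c
    refine ⟨c • delta (none : Brandt I G), ?_⟩
    have h1 : sumCLM (Brandt I G) (delta (none : Brandt I G)) = 1 := by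
      show ∑' s : Brandt I G, (delta (none : Brandt I G)) s = 1
      rw [tsum_option (l1_summable _)]
      have h2 : delta (none : Brandt I G) (none : Brandt I G) = 1 := by
        rw [delta]
        exact @lp.single_apply_self (Brandt I G) (fun _ => ℂ) _
          (fun a b => Classical.propDecidable _) 1 none 1
      have h3 : ∀ t : I × G × I, delta (none : Brandt I G) (some t) = 0 := fun t => by
        rw [delta]
        exact @lp.single_apply_ne (Brandt I G) (fun _ => ℂ) _
          (fun a b => Classical.propDecidable _) 1 none 1 (some t)
          (show some t ≠ none by simp)
      rw [h2]
      simp [h3]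
    rw [map_smul, h1, smul_eq_mul, mul_one]
end
end
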